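/- arXiv:1705.08655 — 2 statements merged into one kernel-verified Lean document; each statement's English description precedes it below -/
import Mathlib

section
/- A partition λ of n, where 2^t is the largest binary digit of n, is odd if and only if λ contains a unique hook of length 2^t and the partition obtained by removing this 2^t-hook is an odd partition of n − 2^t. -/
/-- A partition, given by its weakly decreasing sequence of parts (eventually zero). -/
structure SeqPartition where
  parts : ℕ → ℕ
  antitone : Antitone parts
  finite : ∃ N, parts N = 0

namespace SeqPartition

/-- The size `|λ|` of a partition: the sum of its parts. -/
noncomputable def size (l : SeqPartition) : ℕ := ∑ᶠ i, l.parts i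

/-- The parts of the conjugate partition. -/
noncomputable def conjParts (l : SeqPartition) (j : ℕ) : ℕ := Nat.card {i : ℕ | j < l.parts i}

/-- The hook length of the cell `(i,j)` (0-indexed) of a partition. -/
noncomputable def hookLength (l : SeqPartition) (i j : ℕ) : ℕ :=
  (l.parts i - j) + (l.conjParts j - i) - 1

/-- The degree of the irreducible character of the symmetric group labelled by `l`,
via the hook length formula. -/
noncomputable def degree (l : SeqPartition) : ℕ :=
  (l.size).factorial / ∏ᶠ (p : ℕ × ℕ) (_ : p.2 < l.parts p.1), l.hookLength p.1 p.2

/-- A partition is odd if the corresponding irreducible character of the symmetric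
group has odd degree. -/
noncomputable def IsOdd (l : SeqPartition) : Prop := Odd l.degree

/-- A hook partition: all parts beyond the first are at most 1. -/
def IsHook (l : SeqPartition) : Prop := ∀ i, 1 ≤ i → l.parts i ≤ 1

/-- The beta-set (set of first-column hook lengths) of `l` computed with `N` beads. -/
def betaSet (l : SeqPartition) (N : ℕ) : Finset ℕ :=
  (Finset.range N).image (fun i => l.parts i + (N - 1 - i))

/-- `RemoveHook l m h` : `m` is obtained from `l` by removing a hook of length `h`,
expressed via beta-sets. -/
def RemoveHook (l m : SeqPartition) (h : ℕ) : Prop :=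
  ∃ N, l.parts N = 0 ∧ m.parts N = 0 ∧
    ∃ x ∈ l.betaSet N, h ≤ x ∧ x - h ∉ l.betaSet N ∧
      m.betaSet N = insert (x - h) ((l.betaSet N).erase x)

/-- `IsECore e l c` : `c` is the `e`-core of `l`, i.e. it is obtained from `l` by
successively removing `e`-hooks and has no `e`-hook. -/
def IsECore (e : ℕ) (l c : SeqPartition) : Prop :=
  Relation.ReflTransGen (fun a b => RemoveHook a b e) l c ∧ ∀ b, ¬ RemoveHook c b e

/-- `IsQuotient2 l l0 l1` : `(l0, l1)` is the 2-quotient of `l`, via the parity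
splitting of a beta-set with an even number of beads. -/
def IsQuotient2 (l l0 l1 : SeqPartition) : Prop :=
  ∃ N, Even N ∧ l.parts N = 0 ∧
    l0.parts ((l.betaSet N).filter (fun x => x % 2 = 0)).card = 0 ∧
    l1.parts ((l.betaSet N).filter (fun x => x % 2 = 1)).card = 0 ∧
    l0.betaSet ((l.betaSet N).filter (fun x => x % 2 = 0)).card
      = ((l.betaSet N).filter (fun x => x % 2 = 0)).image (fun x => x / 2) ∧
    l1.betaSet ((l.betaSet N).filter (fun x => x % 2 = 1)).card
      = ((l.betaSet N).filter (fun x => x % 2 = 1)).image (fun x => x / 2)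

/-- `IsQuotRow k l f` : `f 0, …, f (2^k - 1)` is the `k`-th row of the 2-quotient
tower of `l`. -/
def IsQuotRow : ℕ → SeqPartition → (ℕ → SeqPartition) → Prop
  | 0, l, f => f 0 = l
  | k + 1, l, f => ∃ g : ℕ → SeqPartition, IsQuotRow k l g ∧
      ∀ i < 2 ^ k, IsQuotient2 (g i) (f (2 * i)) (f (2 * i + 1))

/-- `DGood d l` : `|l| ≡ 2^d - 1 (mod 2^(d+1))` and the `2^d`-core of `l` is a hook
partition. -/
def DGood (d : ℕ) (l : SeqPartition) : Prop :=
  l.size % 2 ^ (d + 1) = 2 ^ d - 1 ∧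
  ∃ c : SeqPartition, IsECore (2 ^ d) l c ∧ c.IsHook

end SeqPartition

open SeqPartition


open SeqPartition Finset

namespace Aux

/-! ### basic facts about parts and conjugates -/

variable (l : SeqPartition)

lemma parts_pos_lt {N i : ℕ} (hN : l.parts N = 0) (h : 0 < l.parts i) : i < N := by
  by_contra h'
  have := l.antitone (not_lt.1 h')
  omega

/-- the column lengths as a concrete finset -/
lemma conj_eq {N : ℕ} (hN : l.parts N = 0) (j : ℕ) :
    l.conjParts j = ((Finset.range N).filter (fun i => j < l.parts i)).card := by
  have hset : {i : ℕ | j < l.parts i} = ↑((Finset.range N).filter (fun i => j < l.parts i)) := by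
    ext i
    simp only [Finset.coe_filter, Finset.mem_range, Set.mem_setOf_eq]
    constructor
    · intro h
      exact ⟨parts_pos_lt l hN (by omega), h⟩
    · tauto
  rw [conjParts, hset, Nat.card_coe_set_eq, Set.ncard_coe_finset]

lemma lt_conj_iff {N : ℕ} (hN : l.parts N = 0) {i j : ℕ} :
    i < l.conjParts j ↔ j < l.parts i := by
  rw [conj_eq l hN j]
  set S := (Finset.range N).filter (fun i => j < l.parts i) with hS
  have hdc : ∀ a b : ℕ, a ≤ b → b ∈ S → a ∈ S := by
    intro a b hab hb
    simp only [hS, Finset.mem_filter, Finset.mem_range] at hb ⊢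
    have := l.antitone hab
    omega
  have hsub : S ⊆ Finset.range S.card := by
    intro m hm
    by_contra hm'
    have h1 : Finset.Iic m ⊆ S := fun a ha => hdc a m (Finset.mem_Iic.1 ha) hm
    have h2 := Finset.card_le_card h1
    simp only [Nat.card_Iic] at h2
    simp only [Finset.mem_range] at hm'
    omega
  have hSr : S = Finset.range S.card :=
    Finset.eq_of_subset_of_card_le hsub (by simp)
  constructor
  · intro h
    have : i ∈ S := by rw [hSr]; exact Finset.mem_range.2 h
    simp only [hS, Finset.mem_filter] at this
    exact this.2
  · intro h
    have : i ∈ S := by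
      simp only [hS, Finset.mem_filter, Finset.mem_range]
      exact ⟨parts_pos_lt l hN (by omega), h⟩
    rw [hSr] at this
    exact Finset.mem_range.1 this

lemma conj_le {N : ℕ} (hN : l.parts N = 0) (j : ℕ) : l.conjParts j ≤ N := by
  rw [conj_eq l hN j]
  exact le_trans (Finset.card_filter_le _ _) (by simp)

/-! ### beta numbers -/

/-- the `i`-th beta number -/
def bb (l : SeqPartition) (N i : ℕ) : ℕ := l.parts i + (N - 1 - i)

/-- the `j`-th co-beta number (enumeration of the complement of the beta set) -/
noncomputable def ff (l : SeqPartition) (N j : ℕ) : ℕ := N + j - l.conjParts j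

lemma mem_betaSet {N x : ℕ} : x ∈ l.betaSet N ↔ ∃ i < N, bb l N i = x := by
  simp [SeqPartition.betaSet, bb]

lemma bb_strictAnti {N i i' : ℕ} (h : i < i') (h' : i' < N) : bb l N i' < bb l N i := by
  have := l.antitone h.le
  unfold bb; omega

lemma bb_injOn {N : ℕ} {i i' : ℕ} (hi : i < N) (hi' : i' < N)
    (h : bb l N i = bb l N i') : i = i' := by
  rcases lt_trichotomy i i' with h1 | h1 | h1
  · have := bb_strictAnti l h1 hi'
    omega
  · exact h1
  · have := bb_strictAnti l h1 hi
    omega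

lemma card_betaSet (N : ℕ) : (l.betaSet N).card = N := by
  rw [SeqPartition.betaSet, Finset.card_image_of_injOn, Finset.card_range]
  intro i hi i' hi' h
  exact bb_injOn l (Finset.mem_range.1 hi) (Finset.mem_range.1 hi') h

lemma bb_lt (N i : ℕ) (hi : i < N) : bb l N i < l.parts 0 + N := by
  have := l.antitone (Nat.zero_le i)
  unfold bb; omega

lemma ff_notMem {N : ℕ} (hN : l.parts N = 0) (j : ℕ) : ff l N j ∉ l.betaSet N := by
  intro hmem
  obtain ⟨i, hi, hbi⟩ := (mem_betaSet l).1 hmem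
  have hc := conj_le l hN j
  by_cases h : j < l.parts i
  · have h2 := (lt_conj_iff l hN).2 h
    unfold bb ff at hbi
    omega
  · have h2 : ¬ (i < l.conjParts j) := fun hh => h ((lt_conj_iff l hN).1 hh)
    unfold bb ff at hbi
    omega

lemma ff_lt_bb_iff {N : ℕ} (hN : l.parts N = 0) {i j : ℕ} (hi : i < N) :
    ff l N j < bb l N i ↔ j < l.parts i := by
  have hc := conj_le l hN j
  by_cases h : j < l.parts i
  · have h2 := (lt_conj_iff l hN).2 h
    refine ⟨fun _ => h, fun _ => ?_⟩
    unfold bb ff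
    omega
  · have h2 : ¬ (i < l.conjParts j) := fun hh => h ((lt_conj_iff l hN).1 hh)
    refine ⟨fun hlt => absurd hlt ?_, fun hj => absurd hj h⟩
    unfold bb ff
    omega

lemma conj_anti {N : ℕ} (hN : l.parts N = 0) {j j' : ℕ} (h : j ≤ j') :
    l.conjParts j' ≤ l.conjParts j := by
  by_contra hh
  have h1 : l.conjParts j < l.conjParts j' := by omega
  have h2 := (lt_conj_iff l hN).1 h1
  have h3 := (lt_conj_iff l hN (i := l.conjParts j) (j := j)).2 (by omega)
  omega

lemma ff_strictMono {N : ℕ} (hN : l.parts N = 0) : StrictMono (ff l N) := by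
  apply strictMono_nat_of_lt_succ
  intro j
  have h1 := conj_anti l hN (j := j) (j' := j + 1) (by omega)
  have h2 := conj_le l hN j
  unfold ff
  omega

lemma ff_ge {N : ℕ} (hN : l.parts N = 0) (j : ℕ) : j ≤ ff l N j := by
  have := conj_le l hN j
  unfold ff; omega

lemma ff_surj {N : ℕ} (hN : l.parts N = 0) {y : ℕ} (hy : y ∉ l.betaSet N) :
    ∃ j, ff l N j = y := by
  set M := y + 1 with hM
  have hyM : y < ff l N M := lt_of_lt_of_le (by omega) (ff_ge l hN M)
  set A := (Finset.range M).image (ff l N) with hA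
  set R := (Finset.range (ff l N M)).filter (fun z => z ∉ l.betaSet N) with hR
  have hAR : A ⊆ R := by
    intro z hz
    obtain ⟨j, hj, rfl⟩ := Finset.mem_image.1 hz
    refine Finset.mem_filter.2 ⟨Finset.mem_range.2 ?_, ff_notMem l hN j⟩
    exact ff_strictMono l hN (Finset.mem_range.1 hj)
  have cardA : A.card = M := by
    rw [hA, Finset.card_image_of_injOn ((ff_strictMono l hN).injective.injOn), Finset.card_range]
  have hmemB : (Finset.range (ff l N M)).filter (fun z => z ∈ l.betaSet N)
      = (Finset.Ico (l.conjParts M) N).image (bb l N) := by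
    ext z
    simp only [Finset.mem_filter, Finset.mem_range, Finset.mem_image, Finset.mem_Ico]
    constructor
    · rintro ⟨hzlt, hzB⟩
      obtain ⟨i, hi, rfl⟩ := (mem_betaSet l).1 hzB
      refine ⟨i, ⟨?_, hi⟩, rfl⟩
      by_contra hh
      have h1 : i < l.conjParts M := by omega
      have h2 := (lt_conj_iff l hN).1 h1
      have h3 := (ff_lt_bb_iff l hN hi).2 h2
      omega
    · rintro ⟨i, ⟨hci, hi⟩, rfl⟩
      have hzB : bb l N i ∈ l.betaSet N := (mem_betaSet l).2 ⟨i, hi, rfl⟩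
      refine ⟨?_, hzB⟩
      have h1 : ¬ (M < l.parts i) := by
        intro hh
        have := (lt_conj_iff l hN).2 hh
        omega
      have h2 : ¬ (ff l N M < bb l N i) := fun hh => h1 ((ff_lt_bb_iff l hN hi).1 hh)
      have h3 : ff l N M ≠ bb l N i := by
        intro hh
        exact ff_notMem l hN M (hh ▸ hzB)
      omega
  have cardB : ((Finset.range (ff l N M)).filter (fun z => z ∈ l.betaSet N)).card
      = N - l.conjParts M := by
    rw [hmemB, Finset.card_image_of_injOn, Nat.card_Ico]
    intro i hi i' hi' h
    exact bb_injOn l (Finset.mem_Ico.1 hi).2 (Finset.mem_Ico.1 hi').2 h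
  have hcR : R.card = M := by
    have hsplit := Finset.card_filter_add_card_filter_not
      (s := Finset.range (ff l N M)) (p := fun z => z ∈ l.betaSet N)
    have hcle := conj_le l hN M
    have hffM : ff l N M = N + M - l.conjParts M := rfl
    rw [Finset.card_range] at hsplit
    have : R.card = ff l N M - (N - l.conjParts M) := by
      rw [hR]
      omega
    omega
  have hAeq : A = R := Finset.eq_of_subset_of_card_le hAR (by omega)
  have hyR : y ∈ R := Finset.mem_filter.2 ⟨Finset.mem_range.2 hyM, hy⟩
  rw [← hAeq] at hyR
  obtain ⟨j, _, hj⟩ := Finset.mem_image.1 hyR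
  exact ⟨j, hj⟩

/-! ### cells and hooks -/

def cells (l : SeqPartition) (N : ℕ) : Finset (ℕ × ℕ) :=
  ((Finset.range N) ×ˢ (Finset.range (l.parts 0))).filter (fun p => p.2 < l.parts p.1)

lemma mem_cells {N : ℕ} (hN : l.parts N = 0) {p : ℕ × ℕ} :
    p ∈ cells l N ↔ p.2 < l.parts p.1 := by
  constructor
  · intro h; exact (Finset.mem_filter.1 h).2
  · intro h
    have h0 := l.antitone (Nat.zero_le p.1)
    refine Finset.mem_filter.2 ⟨Finset.mem_product.2 ⟨?_, ?_⟩, h⟩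
    · exact Finset.mem_range.2 (parts_pos_lt l hN (by omega))
    · exact Finset.mem_range.2 (by omega)

lemma betaSet_lt {N x : ℕ} (hx : x ∈ l.betaSet N) : x < l.parts 0 + N := by
  obtain ⟨i, hi, rfl⟩ := (mem_betaSet l).1 hx
  exact bb_lt l N i hi

lemma hook_eq {N : ℕ} (hN : l.parts N = 0) {i j : ℕ} (hi : i < N) (hj : j < l.parts i) :
    l.hookLength i j = bb l N i - ff l N j ∧ ff l N j < bb l N i := by
  have h1 := (lt_conj_iff l hN (i := i) (j := j)).2 hj
  have h2 := conj_le l hN j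
  unfold hookLength bb ff
  omega

lemma size_eq_sum {N : ℕ} (hN : l.parts N = 0) :
    l.size = ∑ i ∈ Finset.range N, l.parts i := by
  apply finsum_eq_sum_of_support_subset
  intro i hi
  simp only [Function.mem_support] at hi
  exact Finset.mem_coe.2 (Finset.mem_range.2 (parts_pos_lt l hN (by omega)))

lemma sum_betaSet {N : ℕ} (hN : l.parts N = 0) :
    ∑ x ∈ l.betaSet N, x = l.size + N.choose 2 := by
  rw [SeqPartition.betaSet, Finset.sum_image
    (by intro i hi i' hi' h
        exact bb_injOn l (Finset.mem_range.1 hi) (Finset.mem_range.1 hi') h)]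
  rw [Finset.sum_add_distrib, ← size_eq_sum l hN]
  congr 1
  have h1 : ∑ i ∈ Finset.range N, (N - 1 - i) = ∑ i ∈ Finset.range N, i := by
    rw [← Finset.sum_range_reflect]
    apply Finset.sum_congr rfl
    intro j hj
    have := Finset.mem_range.1 hj
    omega
  rw [h1, Finset.sum_range_id, Nat.choose_two_right]

lemma degree_eq {N : ℕ} (hN : l.parts N = 0) :
    l.degree = (l.size).factorial / ∏ p ∈ cells l N, l.hookLength p.1 p.2 := by
  classical
  rw [SeqPartition.degree]
  congr 1
  have h1 : ∏ᶠ (p : ℕ × ℕ) (_ : p.2 < l.parts p.1), l.hookLength p.1 p.2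
      = ∏ᶠ (p : ℕ × ℕ) (_ : p ∈ (↑(cells l N) : Set (ℕ × ℕ))), l.hookLength p.1 p.2 := by
    refine finprod_congr fun p => ?_
    have hp : (p.2 < l.parts p.1) ↔ (p ∈ (↑(cells l N) : Set (ℕ × ℕ))) := by
      simp only [Finset.mem_coe]
      exact (mem_cells l hN).symm
    rw [finprod_eq_if, finprod_eq_if, if_congr hp rfl rfl]
  rw [h1, finprod_mem_coe_finset]

/-! ### counting hooks divisible by d -/

noncomputable def hooksD (l : SeqPartition) (N d : ℕ) : Finset (ℕ × ℕ) :=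
  (cells l N).filter (fun p => d ∣ l.hookLength p.1 p.2)

def pairsD (l : SeqPartition) (N d : ℕ) : Finset (ℕ × ℕ) :=
  ((l.betaSet N) ×ˢ (Finset.range (l.parts 0 + N))).filter
    (fun q => q.2 < q.1 ∧ q.2 ∉ l.betaSet N ∧ q.1 % d = q.2 % d)

lemma dvd_sub_of_mod_eq {x y d : ℕ} (h : y ≤ x) (hm : x % d = y % d) : d ∣ x - y := by
  have hx := Nat.div_add_mod x d
  have hy := Nat.div_add_mod y d
  have hdd : y / d ≤ x / d := Nat.div_le_div_right h
  refine ⟨x / d - y / d, ?_⟩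
  rw [Nat.mul_sub]
  omega

lemma mod_eq_of_dvd_sub {x y d : ℕ} (h : y ≤ x) (hm : d ∣ x - y) : x % d = y % d := by
  obtain ⟨c, hc⟩ := hm
  have hx : x = y + d * c := by omega
  rw [hx, Nat.add_mul_mod_self_left]

lemma card_hooksD {N d : ℕ} (hN : l.parts N = 0) (hd : 0 < d) :
    (hooksD l N d).card = (pairsD l N d).card := by
  apply Finset.card_bij (fun p _ => (bb l N p.1, ff l N p.2))
  · intro p hp
    obtain ⟨hpc, hpd⟩ := Finset.mem_filter.1 hp
    have hj := (mem_cells l hN).1 hpc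
    have hi : p.1 < N := parts_pos_lt l hN (by omega)
    obtain ⟨he, hlt⟩ := hook_eq l hN hi hj
    refine Finset.mem_filter.2 ⟨Finset.mem_product.2 ⟨?_, ?_⟩, ?_, ?_, ?_⟩
    · exact (mem_betaSet l).2 ⟨p.1, hi, rfl⟩
    · exact Finset.mem_range.2 (lt_trans hlt (bb_lt l N p.1 hi))
    · exact hlt
    · exact ff_notMem l hN p.2
    · exact mod_eq_of_dvd_sub (le_of_lt hlt) (he ▸ hpd)
  · intro p hp q hq hpq
    obtain ⟨hpc, _⟩ := Finset.mem_filter.1 hp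
    obtain ⟨hqc, _⟩ := Finset.mem_filter.1 hq
    have hjp := (mem_cells l hN).1 hpc
    have hip : p.1 < N := parts_pos_lt l hN (by omega)
    have hjq := (mem_cells l hN).1 hqc
    have hiq : q.1 < N := parts_pos_lt l hN (by omega)
    have h1 : bb l N p.1 = bb l N q.1 := congrArg Prod.fst hpq
    have h2 : ff l N p.2 = ff l N q.2 := congrArg Prod.snd hpq
    exact Prod.ext (bb_injOn l hip hiq h1) ((ff_strictMono l hN).injective h2)
  · intro q hq
    obtain ⟨hqp, hlt, hqB, hqm⟩ := Finset.mem_filter.1 hq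
    obtain ⟨hq1, _⟩ := Finset.mem_product.1 hqp
    obtain ⟨i, hi, hbi⟩ := (mem_betaSet l).1 hq1
    obtain ⟨j, hfj⟩ := ff_surj l hN hqB
    have hfb : ff l N j < bb l N i := by rw [hfj, hbi]; exact hlt
    have hj : j < l.parts i := (ff_lt_bb_iff l hN hi).1 hfb
    have hcell : (i, j) ∈ cells l N := (mem_cells l hN).2 hj
    obtain ⟨he, _⟩ := hook_eq l hN hi hj
    refine ⟨(i, j), Finset.mem_filter.2 ⟨hcell, ?_⟩, by rw [Prod.ext_iff]; exact ⟨hbi, hfj⟩⟩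
    rw [he, hbi, hfj]
    exact dvd_sub_of_mod_eq (le_of_lt hlt) hqm

/-- number of smaller naturals in the same class mod d -/
lemma card_sameRes (x d : ℕ) (hd : 0 < d) :
    ((Finset.range x).filter (fun y => y % d = x % d)).card = x / d := by
  have himg : (Finset.range x).filter (fun y => y % d = x % d)
      = (Finset.range (x / d)).image (fun k => x - d * (k + 1)) := by
    ext y
    simp only [Finset.mem_filter, Finset.mem_range, Finset.mem_image]
    constructor
    · rintro ⟨hyx, hym⟩
      have hdvd : d ∣ x - y := dvd_sub_of_mod_eq (le_of_lt hyx) hym.symm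
      obtain ⟨m, hm⟩ := hdvd
      have hm1 : 1 ≤ m := by
        rcases Nat.eq_zero_or_pos m with h | h
        · rw [h, Nat.mul_zero] at hm
          omega
        · exact h
      have hmd : d * m ≤ x := by omega
      have hcomm : d * m = m * d := Nat.mul_comm d m
      have : m ≤ x / d := (Nat.le_div_iff_mul_le hd).2 (by omega)
      refine ⟨m - 1, by omega, ?_⟩
      rw [Nat.sub_add_cancel hm1]
      omega
    · rintro ⟨k, hk, rfl⟩
      have hdk : d * (k + 1) ≤ x := by
        calc d * (k + 1) ≤ d * (x / d) := Nat.mul_le_mul_left d (by omega)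
          _ ≤ x := Nat.mul_div_le x d
      have hpos : 1 ≤ d * (k + 1) := Nat.mul_pos hd (by omega)
      constructor
      · omega
      · exact Nat.sub_mul_mod hdk
  rw [himg, Finset.card_image_of_injOn, Finset.card_range]
  intro a ha b hb hab
  simp only [Finset.coe_range, Set.mem_Iio] at ha hb
  dsimp only at hab
  have hda : d * (a + 1) ≤ x := by
    calc d * (a + 1) ≤ d * (x / d) := Nat.mul_le_mul_left d (by omega)
      _ ≤ x := Nat.mul_div_le x d
  have hdb : d * (b + 1) ≤ x := by
    calc d * (b + 1) ≤ d * (x / d) := Nat.mul_le_mul_left d (by omega)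
      _ ≤ x := Nat.mul_div_le x d
  have : d * (a + 1) = d * (b + 1) := by omega
  have := Nat.eq_of_mul_eq_mul_left hd this
  omega

/-- pairs within a finset with equal residues -/
lemma card_pairs_lt (S : Finset ℕ) :
    ((S ×ˢ S).filter (fun q : ℕ × ℕ => q.2 < q.1)).card = S.card.choose 2 := by
  set T1 := (S ×ˢ S).filter (fun q : ℕ × ℕ => q.2 < q.1) with hT1
  set T2 := (S ×ˢ S).filter (fun q : ℕ × ℕ => q.1 < q.2) with hT2
  have hcards : T1.card = T2.card := by
    apply Finset.card_bij (fun q _ => (q.2, q.1))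
    · intro q hq
      obtain ⟨hqp, hlt⟩ := Finset.mem_filter.1 hq
      obtain ⟨h1, h2⟩ := Finset.mem_product.1 hqp
      exact Finset.mem_filter.2 ⟨Finset.mem_product.2 ⟨h2, h1⟩, hlt⟩
    · intro p _ q _ h
      simp only [Prod.mk.injEq] at h
      exact Prod.ext h.2 h.1
    · intro q hq
      obtain ⟨hqp, hlt⟩ := Finset.mem_filter.1 hq
      obtain ⟨h1, h2⟩ := Finset.mem_product.1 hqp
      exact ⟨(q.2, q.1), Finset.mem_filter.2 ⟨Finset.mem_product.2 ⟨h2, h1⟩, hlt⟩, rfl⟩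
  have hdisj : Disjoint T1 T2 := by
    rw [Finset.disjoint_left]
    intro q h1 h2
    have := (Finset.mem_filter.1 h1).2
    have := (Finset.mem_filter.1 h2).2
    omega
  have hunion : T1 ∪ T2 = S.offDiag := by
    ext q
    simp only [hT1, hT2, Finset.mem_union, Finset.mem_filter, Finset.mem_product,
      Finset.mem_offDiag]
    constructor
    · rintro (⟨⟨ha, hb⟩, hlt⟩ | ⟨⟨ha, hb⟩, hlt⟩) <;> exact ⟨ha, hb, by omega⟩
    · rintro ⟨ha, hb, hne⟩
      rcases Nat.lt_or_ge q.1 q.2 with h | h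
      · exact Or.inr ⟨⟨ha, hb⟩, h⟩
      · exact Or.inl ⟨⟨ha, hb⟩, by omega⟩
  have hoff := Finset.offDiag_card S
  have hu := Finset.card_union_of_disjoint hdisj
  rw [hunion] at hu
  set n := S.card with hn
  have h2T : 2 * T1.card = n * n - n := by omega
  have hnn : n * (n - 1) = n * n - n := by
    rcases Nat.eq_zero_or_pos n with h | h
    · simp [h]
    · rw [Nat.mul_sub, mul_one]
  have heven : Even (n * (n - 1)) := by
    rcases n with _ | m
    · simp
    · simpa [Nat.mul_comm, Nat.succ_sub_one] using Nat.even_mul_succ_self m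
  obtain ⟨c, hc⟩ := heven
  have hch : n.choose 2 = c := by
    rw [Nat.choose_two_right, hc]
    omega
  omega

lemma card_pairsB (S : Finset ℕ) (d : ℕ) (hd : 0 < d) :
    ((S ×ˢ S).filter (fun q : ℕ × ℕ => q.2 < q.1 ∧ q.1 % d = q.2 % d)).card
      = ∑ r ∈ Finset.range d, ((S.filter (fun z => z % d = r)).card).choose 2 := by
  have hdecomp : ((S ×ˢ S).filter (fun q : ℕ × ℕ => q.2 < q.1 ∧ q.1 % d = q.2 % d))
      = (Finset.range d).biUnion (fun r =>
        ((S.filter (fun z => z % d = r)) ×ˢ (S.filter (fun z => z % d = r))).filter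
          (fun q : ℕ × ℕ => q.2 < q.1)) := by
    ext q
    simp only [Finset.mem_filter, Finset.mem_product, Finset.mem_biUnion, Finset.mem_range]
    constructor
    · rintro ⟨⟨h1, h2⟩, hlt, hm⟩
      exact ⟨q.1 % d, Nat.mod_lt _ hd, ⟨⟨h1, rfl⟩, ⟨h2, hm.symm⟩⟩, hlt⟩
    · rintro ⟨r, _, ⟨⟨h1, e1⟩, h2, e2⟩, hlt⟩
      exact ⟨⟨h1, h2⟩, hlt, by omega⟩
  rw [hdecomp, Finset.card_biUnion]
  · exact Finset.sum_congr rfl fun r _ => card_pairs_lt _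
  · intro r hr r' hr' hne
    rw [Function.onFun, Finset.disjoint_left]
    intro q h1 h2
    obtain ⟨hq1, _⟩ := Finset.mem_filter.1 h1
    obtain ⟨hq2, _⟩ := Finset.mem_filter.1 h2
    obtain ⟨hm1, _⟩ := Finset.mem_product.1 hq1
    obtain ⟨hm2, _⟩ := Finset.mem_product.1 hq2
    exact hne ((Finset.mem_filter.1 hm1).2 ▸ (Finset.mem_filter.1 hm2).2)

/-- master counting formula -/
lemma hooksD_formula {N d : ℕ} (hN : l.parts N = 0) (hd : 0 < d) :
    (hooksD l N d).card
      + ∑ r ∈ Finset.range d, (((l.betaSet N).filter (fun z => z % d = r)).card).choose 2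
      = ∑ x ∈ l.betaSet N, x / d := by
  classical
  set B := l.betaSet N with hB
  have hfib : (pairsD l N d).card
      = ∑ x ∈ B, ((pairsD l N d).filter (fun q => q.1 = x)).card :=
    Finset.card_eq_sum_card_fiberwise
      (fun q hq => (Finset.mem_product.1 (Finset.mem_filter.1 hq).1).1)
  have hYx : ∀ x ∈ B, ((pairsD l N d).filter (fun q => q.1 = x)).card
      = ((Finset.range x).filter (fun y => y ∉ B ∧ y % d = x % d)).card := by
    intro x hx
    have himg : (pairsD l N d).filter (fun q => q.1 = x)
        = ((Finset.range x).filter (fun y => y ∉ B ∧ y % d = x % d)).image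
          (fun y => (x, y)) := by
      ext q
      simp only [pairsD, Finset.mem_filter, Finset.mem_product, Finset.mem_image,
        Finset.mem_range, ← hB]
      constructor
      · rintro ⟨⟨⟨hq1, hq2⟩, hlt, hnB, hm⟩, he⟩
        subst he
        exact ⟨q.2, ⟨hlt, hnB, hm.symm⟩, Prod.mk.eta⟩
      · rintro ⟨y, ⟨hy1, hy2, hy3⟩, rfl⟩
        have hxlt : x < l.parts 0 + N := betaSet_lt l hx
        exact ⟨⟨⟨hx, by omega⟩, hy1, hy2, hy3.symm⟩, rfl⟩
    rw [himg, Finset.card_image_of_injOn]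
    intro a _ b _ h
    simpa using h
  have hZx : ∀ x ∈ B, (((B ×ˢ B).filter
        (fun q : ℕ × ℕ => q.2 < q.1 ∧ q.1 % d = q.2 % d)).filter (fun q => q.1 = x)).card
      = ((Finset.range x).filter (fun y => y ∈ B ∧ y % d = x % d)).card := by
    intro x hx
    have himg : ((B ×ˢ B).filter
          (fun q : ℕ × ℕ => q.2 < q.1 ∧ q.1 % d = q.2 % d)).filter (fun q => q.1 = x)
        = ((Finset.range x).filter (fun y => y ∈ B ∧ y % d = x % d)).image
          (fun y => (x, y)) := by
      ext q
      simp only [Finset.mem_filter, Finset.mem_product, Finset.mem_image, Finset.mem_range]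
      constructor
      · rintro ⟨⟨⟨hq1, hq2⟩, hlt, hm⟩, he⟩
        subst he
        exact ⟨q.2, ⟨hlt, hq2, hm.symm⟩, Prod.mk.eta⟩
      · rintro ⟨y, ⟨hy1, hy2, hy3⟩, rfl⟩
        exact ⟨⟨⟨hx, hy2⟩, hy1, hy3.symm⟩, rfl⟩
    rw [himg, Finset.card_image_of_injOn]
    intro a _ b _ h
    simpa using h
  have hZfib : ((B ×ˢ B).filter
        (fun q : ℕ × ℕ => q.2 < q.1 ∧ q.1 % d = q.2 % d)).card
      = ∑ x ∈ B, ((Finset.range x).filter (fun y => y ∈ B ∧ y % d = x % d)).card := by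
    rw [Finset.card_eq_sum_card_fiberwise
      (f := Prod.fst) (t := B)
      (fun q hq => (Finset.mem_product.1 (Finset.mem_filter.1 hq).1).1)]
    exact Finset.sum_congr rfl hZx
  have hsplit : ∀ x : ℕ, ((Finset.range x).filter (fun y => y ∉ B ∧ y % d = x % d)).card
      + ((Finset.range x).filter (fun y => y ∈ B ∧ y % d = x % d)).card = x / d := by
    intro x
    set W := (Finset.range x).filter (fun y => y % d = x % d) with hW
    have h1 : (Finset.range x).filter (fun y => y ∉ B ∧ y % d = x % d)
        = W.filter (fun y => y ∉ B) := by
      rw [hW, Finset.filter_filter]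
      apply Finset.filter_congr
      intro y _
      tauto
    have h2 : (Finset.range x).filter (fun y => y ∈ B ∧ y % d = x % d)
        = W.filter (fun y => y ∈ B) := by
      rw [hW, Finset.filter_filter]
      apply Finset.filter_congr
      intro y _
      tauto
    have h3 := Finset.card_filter_add_card_filter_not
      (s := W) (p := fun y => y ∈ B)
    have h4 : W.card = x / d := by rw [hW]; exact card_sameRes x d hd
    rw [h1, h2]
    omega
  rw [card_hooksD l hN hd, ← card_pairsB B d hd, hfib, hZfib,
    ← Finset.sum_add_distrib]
  apply Finset.sum_congr rfl
  intro x hx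
  rw [hYx x hx]
  exact hsplit x

/-- the numeric inequality -/
lemma two_mul_choose_two (n : ℕ) : 2 * n.choose 2 = n * (n - 1) := by
  rcases n with _ | m
  · simp
  · rw [Nat.choose_two_right]
    have : Even ((m + 1) * m) := by simpa [Nat.mul_comm] using Nat.even_mul_succ_self m
    obtain ⟨c, hc⟩ := this
    simp only [Nat.succ_sub_one]
    omega

lemma key_ineq (a b : ℕ) : a * b ≤ a.choose 2 + b.choose 2 + b := by
  have ha := two_mul_choose_two a
  have hb := two_mul_choose_two b
  rcases Nat.eq_zero_or_pos a with h | h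
  · simp [h]
  rcases Nat.eq_zero_or_pos b with h' | h'
  · simp [h']
  have hid : a * (a - 1) + b * (b - 1) + 2 * b ≥ 2 * (a * b) := by
    zify [h, h']
    nlinarith [sq_nonneg ((a : ℤ) - b)]
  omega

lemma choose_add_eq (S m : ℕ) : (S + m).choose 2 = S.choose 2 + m.choose 2 + S * m := by
  have h1 := two_mul_choose_two (S + m)
  have h2 := two_mul_choose_two S
  have h3 := two_mul_choose_two m
  have hid : (S + m) * (S + m - 1) = S * (S - 1) + m * (m - 1) + 2 * (S * m) := by
    rcases Nat.eq_zero_or_pos S with hS | hS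
    · simp [hS]
    rcases Nat.eq_zero_or_pos m with hm | hm
    · simp [hm]
    zify [hS, hm, show 1 ≤ S + m by omega]
    ring
  omega

lemma choose_ineq (d : ℕ) (f : ℕ → ℕ) :
    (∑ r ∈ Finset.range d, f r).choose 2
      ≤ ∑ r ∈ Finset.range d, (d * (f r).choose 2 + r * f r) := by
  induction d with
  | zero => simp
  | succ d ih =>
    rw [Finset.sum_range_succ (f := f), Finset.sum_range_succ]
    set S := ∑ r ∈ Finset.range d, f r with hS
    set m := f d with hm
    have hCsum := choose_add_eq S m
    have hkeysum : S * m ≤ (∑ r ∈ Finset.range d, (f r).choose 2)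
        + d * (m.choose 2 + m) := by
      calc S * m = ∑ r ∈ Finset.range d, f r * m := by rw [hS, Finset.sum_mul]
        _ ≤ ∑ r ∈ Finset.range d, ((f r).choose 2 + (m.choose 2 + m)) := by
            apply Finset.sum_le_sum
            intro r _
            have := key_ineq (f r) m
            omega
        _ = (∑ r ∈ Finset.range d, (f r).choose 2) + d * (m.choose 2 + m) := by
            rw [Finset.sum_add_distrib, Finset.sum_const, Finset.card_range, smul_eq_mul,
              Nat.mul_comm]
    have hC' : ∑ r ∈ Finset.range d, ((d + 1) * (f r).choose 2 + r * f r)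
        = (∑ r ∈ Finset.range d, (d * (f r).choose 2 + r * f r))
          + ∑ r ∈ Finset.range d, (f r).choose 2 := by
      rw [← Finset.sum_add_distrib]
      apply Finset.sum_congr rfl
      intro r _
      ring
    have hd1 : d * (m.choose 2 + m) = d * m.choose 2 + d * m := Nat.mul_add d _ _
    have hd2 : (d + 1) * m.choose 2 = d * m.choose 2 + m.choose 2 := by ring
    omega

lemma hooksD_le {N d : ℕ} (hN : l.parts N = 0) (hd : 0 < d) :
    d * (hooksD l N d).card ≤ l.size := by
  classical
  have hf := hooksD_formula l hN hd
  have hsum := sum_betaSet l hN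
  have hcard := card_betaSet l N
  have h1 : ∑ x ∈ l.betaSet N, x = d * (∑ x ∈ l.betaSet N, x / d) + ∑ x ∈ l.betaSet N, x % d := by
    rw [Finset.mul_sum, ← Finset.sum_add_distrib]
    exact (Finset.sum_congr rfl fun x _ => (Nat.div_add_mod x d).symm)
  have h2 : ∑ x ∈ l.betaSet N, x % d
      = ∑ r ∈ Finset.range d, r * ((l.betaSet N).filter (fun z => z % d = r)).card := by
    rw [← Finset.sum_fiberwise_of_maps_to
      (g := fun x => x % d) (t := Finset.range d)
      (fun x _ => Finset.mem_range.2 (Nat.mod_lt _ hd))]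
    apply Finset.sum_congr rfl
    intro r _
    rw [Finset.sum_congr rfl (fun x hx => (Finset.mem_filter.1 hx).2),
      Finset.sum_const, smul_eq_mul, Nat.mul_comm]
  have h3 : (l.betaSet N).card
      = ∑ r ∈ Finset.range d, ((l.betaSet N).filter (fun z => z % d = r)).card :=
    Finset.card_eq_sum_card_fiberwise
      (f := fun z => z % d) (t := Finset.range d)
      (fun x _ => Finset.mem_range.2 (Nat.mod_lt _ hd))
  have h4 := choose_ineq d (fun r => ((l.betaSet N).filter (fun z => z % d = r)).card)
  rw [← h3, hcard] at h4
  have h5 : ∑ r ∈ Finset.range d,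
      (d * (((l.betaSet N).filter (fun z => z % d = r)).card).choose 2
        + r * ((l.betaSet N).filter (fun z => z % d = r)).card)
      = d * (∑ r ∈ Finset.range d, (((l.betaSet N).filter (fun z => z % d = r)).card).choose 2)
        + ∑ r ∈ Finset.range d, r * ((l.betaSet N).filter (fun z => z % d = r)).card := by
    rw [Finset.sum_add_distrib, Finset.mul_sum]
  have h6 : d * ((hooksD l N d).card
      + ∑ r ∈ Finset.range d, (((l.betaSet N).filter (fun z => z % d = r)).card).choose 2)
      = d * ∑ x ∈ l.betaSet N, x / d := by rw [hf]
  have h7 : d * ((hooksD l N d).card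
      + ∑ r ∈ Finset.range d, (((l.betaSet N).filter (fun z => z % d = r)).card).choose 2)
      = d * (hooksD l N d).card
        + d * ∑ r ∈ Finset.range d, (((l.betaSet N).filter (fun z => z % d = r)).card).choose 2 :=
    Nat.mul_add d _ _
  omega

/-! ### valuations -/

lemma hook_pos {N : ℕ} (hN : l.parts N = 0) {p : ℕ × ℕ} (hp : p ∈ cells l N) :
    0 < l.hookLength p.1 p.2 := by
  have hj := (mem_cells l hN).1 hp
  have hi : p.1 < N := parts_pos_lt l hN (by omega)
  obtain ⟨he, hlt⟩ := hook_eq l hN hi hj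
  omega

lemma hook_le_size {N : ℕ} (hN : l.parts N = 0) {p : ℕ × ℕ} (hp : p ∈ cells l N) :
    l.hookLength p.1 p.2 ≤ l.size := by
  have hj := (mem_cells l hN).1 hp
  have hi : p.1 < N := parts_pos_lt l hN (by omega)
  set L := l.conjParts 0 with hL
  have hL1 : p.1 < L := (lt_conj_iff l hN).2 (by omega)
  have hLN : L ≤ N := conj_le l hN 0
  have hconj : l.conjParts p.2 ≤ L := conj_anti l hN (Nat.zero_le _)
  have hsum : l.size = ∑ i ∈ Finset.range N, l.parts i := size_eq_sum l hN
  have hsplit : ∑ i ∈ Finset.range N, l.parts i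
      = ∑ i ∈ Finset.range L, l.parts i + ∑ i ∈ Finset.Ico L N, l.parts i := by
    rw [Finset.range_eq_Ico, ← Finset.sum_Ico_consecutive _ (Nat.zero_le L) hLN, Finset.range_eq_Ico]
  have hRows : l.parts p.1 + (L - 1) ≤ ∑ i ∈ Finset.range L, l.parts i := by
    have hmem : p.1 ∈ Finset.range L := Finset.mem_range.2 hL1
    rw [← Finset.sum_erase_add _ _ hmem]
    have hone : ∀ i ∈ (Finset.range L).erase p.1, 1 ≤ l.parts i := by
      intro i hi
      have hiL : i < L := Finset.mem_range.1 (Finset.mem_of_mem_erase hi)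
      exact (lt_conj_iff l hN).1 (by omega)
    have hcard : ((Finset.range L).erase p.1).card = L - 1 := by
      rw [Finset.card_erase_of_mem hmem, Finset.card_range]
    have hle := Finset.card_nsmul_le_sum ((Finset.range L).erase p.1) l.parts 1 hone
    have hle2 : L - 1 ≤ ∑ i ∈ (Finset.range L).erase p.1, l.parts i := by
      simpa [hcard] using hle
    omega
  have hHook : l.hookLength p.1 p.2 ≤ l.parts p.1 + L - 1 := by
    unfold hookLength
    omega
  omega

lemma prod_hooks_val {N : ℕ} (hN : l.parts N = 0) {pp : ℕ} (hp : pp.Prime) {K : ℕ}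
    (hK : l.size < pp ^ K) :
    (∏ p ∈ cells l N, l.hookLength p.1 p.2).factorization pp
      = ∑ k ∈ Finset.Ico 1 K, (hooksD l N (pp ^ k)).card := by
  classical
  have hne : ∀ p ∈ cells l N, l.hookLength p.1 p.2 ≠ 0 :=
    fun p hp' => (hook_pos l hN hp').ne'
  have hprod := Nat.factorization_prod hne
  have happ : (∏ p ∈ cells l N, l.hookLength p.1 p.2).factorization pp
      = ∑ p ∈ cells l N, (l.hookLength p.1 p.2).factorization pp := by
    rw [hprod]
    exact Finset.sum_apply' pp
  rw [happ]
  have hcell : ∀ p ∈ cells l N, (l.hookLength p.1 p.2).factorization pp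
      = ((Finset.Ico 1 K).filter (fun k => pp ^ k ∣ l.hookLength p.1 p.2)).card := by
    intro p hpc
    have h0 : l.hookLength p.1 p.2 ≠ 0 := (hook_pos l hN hpc).ne'
    set v := (l.hookLength p.1 p.2).factorization pp with hv
    have hvK : v < K := by
      have hdvd : pp ^ v ∣ l.hookLength p.1 p.2 :=
        (Nat.Prime.pow_dvd_iff_le_factorization hp h0).2 (le_refl v)
      have hle : pp ^ v ≤ l.hookLength p.1 p.2 := Nat.le_of_dvd (hook_pos l hN hpc) hdvd
      have hsz := hook_le_size l hN hpc
      have : pp ^ v < pp ^ K := by omega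
      exact (Nat.pow_lt_pow_iff_right hp.one_lt).1 this
    have hfil : (Finset.Ico 1 K).filter (fun k => pp ^ k ∣ l.hookLength p.1 p.2)
        = Finset.Ico 1 (v + 1) := by
      ext k
      simp only [Finset.mem_filter, Finset.mem_Ico]
      constructor
      · rintro ⟨⟨h1, _⟩, hdvd⟩
        have := (Nat.Prime.pow_dvd_iff_le_factorization hp h0).1 hdvd
        omega
      · rintro ⟨h1, h2⟩
        exact ⟨⟨h1, by omega⟩,
          (Nat.Prime.pow_dvd_iff_le_factorization hp h0).2 (by omega)⟩
    rw [hfil, Nat.card_Ico]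
    omega
  rw [Finset.sum_congr rfl hcell]
  have hswap : ∑ p ∈ cells l N,
      ((Finset.Ico 1 K).filter (fun k => pp ^ k ∣ l.hookLength p.1 p.2)).card
      = ∑ k ∈ Finset.Ico 1 K,
        ((cells l N).filter (fun p => pp ^ k ∣ l.hookLength p.1 p.2)).card := by
    simp only [Finset.card_filter]
    exact Finset.sum_comm
  rw [hswap]
  rfl

lemma size_lt_pow {pp : ℕ} (hp : pp.Prime) (n : ℕ) : n < pp ^ (n + 1) := by
  have h1 : n < 2 ^ (n + 1) := by
    have := Nat.lt_two_pow_self (n := n)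
    have : (2:ℕ) ^ n ≤ 2 ^ (n + 1) := Nat.pow_le_pow_right (by omega) (by omega)
    omega
  have h2 : (2:ℕ) ^ (n + 1) ≤ pp ^ (n + 1) := Nat.pow_le_pow_left hp.two_le _
  omega

lemma hooksD_le_div {N d : ℕ} (hN : l.parts N = 0) (hd : 0 < d) :
    (hooksD l N d).card ≤ l.size / d := by
  rw [Nat.le_div_iff_mul_le hd]
  rw [Nat.mul_comm]
  exact hooksD_le l hN hd

lemma factorial_val {pp : ℕ} (hp : pp.Prime) (n : ℕ) :
    (n.factorial).factorization pp = ∑ k ∈ Finset.Ico 1 (n + 1), n / pp ^ k := by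
  haveI := Fact.mk hp
  rw [Nat.factorization_def _ hp]
  exact padicValNat_factorial (by
    have := Nat.log_le_self pp n
    omega)

lemma prod_hooks_dvd {N : ℕ} (hN : l.parts N = 0) :
    (∏ p ∈ cells l N, l.hookLength p.1 p.2) ∣ (l.size).factorial := by
  classical
  have hP0 : (∏ p ∈ cells l N, l.hookLength p.1 p.2) ≠ 0 :=
    (Finset.prod_pos (fun p hp => hook_pos l hN hp)).ne'
  have hF0 : (l.size).factorial ≠ 0 := (Nat.factorial_pos _).ne'
  rw [← Nat.factorization_le_iff_dvd hP0 hF0]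
  rw [Finsupp.le_def]
  intro pp
  by_cases hp : pp.Prime
  · rw [prod_hooks_val l hN hp (size_lt_pow hp l.size), factorial_val hp l.size]
    apply Finset.sum_le_sum
    intro k hk
    exact hooksD_le_div l hN (pow_pos hp.pos k)
  · rw [Nat.factorization_eq_zero_of_not_prime _ hp]
    exact Nat.zero_le _

/-- the key criterion -/
lemma isOdd_iff {N : ℕ} (hN : l.parts N = 0) :
    l.IsOdd ↔ ∀ k, 0 < k → (hooksD l N (2 ^ k)).card = l.size / 2 ^ k := by
  classical
  set n := l.size with hn
  set P := ∏ p ∈ cells l N, l.hookLength p.1 p.2 with hP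
  have hP0 : 0 < P := Finset.prod_pos (fun p hp => hook_pos l hN hp)
  have hdvd : P ∣ n.factorial := prod_hooks_dvd l hN
  have hdeg : l.degree = n.factorial / P := degree_eq l hN
  have hdeg0 : l.degree ≠ 0 := by
    rw [hdeg]
    exact (Nat.div_pos (Nat.le_of_dvd (Nat.factorial_pos n) hdvd) hP0).ne'
  have h2 : Nat.Prime 2 := Nat.prime_two
  have hval2 : (n.factorial).factorization 2
      = ∑ k ∈ Finset.Ico 1 (n + 1), n / 2 ^ k := factorial_val h2 n
  have hvalP : P.factorization 2
      = ∑ k ∈ Finset.Ico 1 (n + 1), (hooksD l N (2 ^ k)).card :=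
    prod_hooks_val l hN h2 (size_lt_pow h2 n)
  have hterm : ∀ k ∈ Finset.Ico 1 (n + 1), (hooksD l N (2 ^ k)).card ≤ n / 2 ^ k :=
    fun k _ => hooksD_le_div l hN (pow_pos (by omega) k)
  have hvle : P.factorization 2 ≤ (n.factorial).factorization 2 := by
    rw [hval2, hvalP]
    exact Finset.sum_le_sum hterm
  have hodd : l.IsOdd ↔ l.degree.factorization 2 = 0 := by
    rw [SeqPartition.IsOdd, Nat.odd_iff, ← Nat.two_dvd_ne_zero,
      Nat.Prime.dvd_iff_one_le_factorization h2 hdeg0]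
    omega
  have hfd : l.degree.factorization 2 = (n.factorial).factorization 2 - P.factorization 2 := by
    rw [hdeg, Nat.factorization_div hdvd]
    simp
  rw [hodd, hfd]
  constructor
  · intro hsum k hk
    have heq : (n.factorial).factorization 2 = P.factorization 2 := by omega
    rw [hval2, hvalP] at heq
    have hall := (Finset.sum_eq_sum_iff_of_le hterm).1 heq.symm
    by_cases hkn : k < n + 1
    · exact hall k (Finset.mem_Ico.2 ⟨hk, hkn⟩)
    · have hk2 : n < 2 ^ k := by
        have h1 : n < 2 ^ n := Nat.lt_two_pow_self (n := n)
        have h2' : (2:ℕ) ^ n ≤ 2 ^ k := Nat.pow_le_pow_right (by omega) (by omega)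
        omega
      have hz : n / 2 ^ k = 0 := Nat.div_eq_of_lt hk2
      have := hooksD_le_div l hN (d := 2 ^ k) (pow_pos (by omega) k)
      rw [← hn] at this
      omega
  · intro hall
    have heq : ∑ k ∈ Finset.Ico 1 (n + 1), (hooksD l N (2 ^ k)).card
        = ∑ k ∈ Finset.Ico 1 (n + 1), n / 2 ^ k := by
      apply Finset.sum_congr rfl
      intro k hk
      exact hall k (Finset.mem_Ico.1 hk).1
    rw [hval2, hvalP, heq]
    omega

/-! ### constructing a partition from a beta set -/

lemma partition_of_betaSet {N : ℕ} (S : Finset ℕ) (hS : S.card = N) :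
    ∃ m : SeqPartition, m.parts N = 0 ∧ m.betaSet N = S := by
  classical
  set e := S.orderEmbOfFin hS with he
  have hmono : ∀ k a : ℕ, ∀ h : a + k < N, (e ⟨a, by omega⟩ : ℕ) + k ≤ e ⟨a + k, h⟩ := by
    intro k
    induction k with
    | zero => intro a h; simp
    | succ k ih =>
      intro a h
      have h1 : a + k < N := by omega
      have h2 := ih a h1
      have h3 : (e ⟨a + k, h1⟩ : ℕ) < e ⟨a + (k + 1), h⟩ := by
        apply e.strictMono
        exact Fin.mk_lt_mk.2 (by omega)
      omega
  have hge : ∀ k : ℕ, ∀ h : k < N, k ≤ e ⟨k, h⟩ := by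
    intro k h
    have h2 := hmono k 0 (by omega)
    have hfe : (⟨0 + k, by omega⟩ : Fin N) = ⟨k, h⟩ := by
      apply Fin.ext
      simp
    rw [hfe] at h2
    omega
  set pf : ℕ → ℕ := fun i => if h : i < N then (e ⟨N - 1 - i, by omega⟩ : ℕ) - (N - 1 - i) else 0
    with hpf
  have hanti : Antitone pf := by
    intro i i' hii
    by_cases hi' : i' < N
    · have hi : i < N := by omega
      simp only [hpf, dif_pos hi, dif_pos hi']
      have ha : N - 1 - i' ≤ N - 1 - i := by omega
      have hmm := hmono ((N - 1 - i) - (N - 1 - i')) (N - 1 - i') (by omega)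
      have hgei := hge (N - 1 - i) (by omega)
      have hgei' := hge (N - 1 - i') (by omega)
      have hfe : (⟨N - 1 - i' + ((N - 1 - i) - (N - 1 - i')), by omega⟩ : Fin N)
          = ⟨N - 1 - i, by omega⟩ := by
        apply Fin.ext
        simp only
        omega
      rw [hfe] at hmm
      omega
    · simp only [hpf, dif_neg hi']
      exact Nat.zero_le _
  have hfin : ∃ M, pf M = 0 := ⟨N, by simp [hpf]⟩
  refine ⟨⟨pf, hanti, hfin⟩, by simp [hpf], ?_⟩
  rw [SeqPartition.betaSet]
  ext x
  simp only [Finset.mem_image, Finset.mem_range]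
  constructor
  · rintro ⟨i, hi, rfl⟩
    have hk : N - 1 - i < N := by omega
    have hgei := hge (N - 1 - i) hk
    simp only [hpf, dif_pos hi]
    have : (e ⟨N - 1 - i, hk⟩ : ℕ) - (N - 1 - i) + (N - 1 - i) = e ⟨N - 1 - i, hk⟩ := by
      omega
    rw [this]
    exact S.orderEmbOfFin_mem hS _
  · intro hx
    have : x ∈ Set.range (e : Fin N → ℕ) := by
      rw [he, Finset.range_orderEmbOfFin]
      exact hx
    obtain ⟨⟨k, hk⟩, hek⟩ := this
    refine ⟨N - 1 - k, by omega, ?_⟩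
    have hgei := hge k hk
    have hkk : N - 1 - (N - 1 - k) = k := by omega
    simp only [hpf, dif_pos (show N - 1 - k < N by omega)]
    have : (⟨N - 1 - (N - 1 - k), by omega⟩ : Fin N) = ⟨k, hk⟩ := by
      simp [hkk]
    rw [this]
    omega

/-! ### transfer under hook removal -/

lemma transfer {N d h : ℕ} (m : SeqPartition) (hN : l.parts N = 0) (hmN : m.parts N = 0)
    (hd : 0 < d) (hdh : d ∣ h) {x : ℕ} (hx : x ∈ l.betaSet N) (hhx : h ≤ x)
    (hxh : x - h ∉ l.betaSet N)
    (hB : m.betaSet N = insert (x - h) ((l.betaSet N).erase x)) :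
    (hooksD m N d).card + h / d = (hooksD l N d).card := by
  classical
  have hfm := hooksD_formula m hmN hd
  have hfl := hooksD_formula l hN hd
  rw [hB] at hfm
  obtain ⟨c, hc⟩ := hdh
  have hc0 : h / d = c := by rw [hc]; exact Nat.mul_div_cancel_left c hd
  have hdcx : d * c ≤ x := by omega
  have hsub : (x - d * c) / d = x / d - c := Nat.sub_mul_div x d c
  have hcle : c ≤ x / d := by
    rw [Nat.le_div_iff_mul_le hd]
    have : c * d = d * c := Nat.mul_comm c d
    omega
  have hxd : (x - h) / d + h / d = x / d := by
    rw [hc, hsub, Nat.mul_div_cancel_left c hd]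
    omega
  have hnotin : x - h ∉ (l.betaSet N).erase x :=
    fun hcon => hxh (Finset.mem_of_mem_erase hcon)
  have hsum1 : ∑ z ∈ insert (x - h) ((l.betaSet N).erase x), z / d
      = (x - h) / d + ∑ z ∈ (l.betaSet N).erase x, z / d := Finset.sum_insert hnotin
  have hsum2 : (∑ z ∈ (l.betaSet N).erase x, z / d) + x / d
      = ∑ z ∈ l.betaSet N, z / d := Finset.sum_erase_add _ _ hx
  have hmm : (x - h) % d = x % d := by
    have h1 : x - (x - h) = h := by omega
    exact (mod_eq_of_dvd_sub (by omega) (by rw [h1]; exact ⟨c, hc⟩)).symm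
  have hclass : ∀ r, ((insert (x - h) ((l.betaSet N).erase x)).filter
        (fun z => z % d = r)).card
      = ((l.betaSet N).filter (fun z => z % d = r)).card := by
    intro r
    rw [Finset.filter_insert]
    by_cases hr : (x - h) % d = r
    · rw [if_pos hr, Finset.filter_erase]
      have hxf : x ∈ (l.betaSet N).filter (fun z => z % d = r) :=
        Finset.mem_filter.2 ⟨hx, by omega⟩
      have hnf : (x - h) ∉ ((l.betaSet N).filter (fun z => z % d = r)).erase x :=
        fun hcon => hxh (Finset.mem_filter.1 (Finset.mem_of_mem_erase hcon)).1
      rw [Finset.card_insert_of_notMem hnf, Finset.card_erase_of_mem hxf]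
      have hpos : 0 < ((l.betaSet N).filter (fun z => z % d = r)).card :=
        Finset.card_pos.2 ⟨x, hxf⟩
      omega
    · rw [if_neg hr, Finset.filter_erase, Finset.erase_eq_of_notMem]
      intro hcon
      have := (Finset.mem_filter.1 hcon).2
      omega
  have hchoose : ∑ r ∈ Finset.range d,
        (((insert (x - h) ((l.betaSet N).erase x)).filter (fun z => z % d = r)).card).choose 2
      = ∑ r ∈ Finset.range d,
        (((l.betaSet N).filter (fun z => z % d = r)).card).choose 2 :=
    Finset.sum_congr rfl (fun r _ => by rw [hclass r])
  omega

lemma size_transfer {N h : ℕ} (m : SeqPartition) (hN : l.parts N = 0) (hmN : m.parts N = 0)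
    {x : ℕ} (hx : x ∈ l.betaSet N) (hhx : h ≤ x) (hxh : x - h ∉ l.betaSet N)
    (hB : m.betaSet N = insert (x - h) ((l.betaSet N).erase x)) :
    m.size = l.size - h ∧ h ≤ l.size := by
  classical
  have hsl := sum_betaSet l hN
  have hsm := sum_betaSet m hmN
  rw [hB] at hsm
  have hnotin : x - h ∉ (l.betaSet N).erase x :=
    fun hcon => hxh (Finset.mem_of_mem_erase hcon)
  have hsum1 : ∑ z ∈ insert (x - h) ((l.betaSet N).erase x), z
      = (x - h) + ∑ z ∈ (l.betaSet N).erase x, z := Finset.sum_insert hnotin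
  have hsum2 : (∑ z ∈ (l.betaSet N).erase x, z) + x
      = ∑ z ∈ l.betaSet N, z := Finset.sum_erase_add _ _ hx
  omega

end Aux

open Aux

lemma card_cells (l : SeqPartition) {N : ℕ} (hN : l.parts N = 0) :
    (cells l N).card = l.size := by
  classical
  have hf := hooksD_formula l hN (d := 1) (by omega)
  have h1 : hooksD l N 1 = cells l N := by
    apply Finset.filter_true_of_mem
    intro p _
    exact one_dvd _
  have h2 : ∑ r ∈ Finset.range 1,
      (((l.betaSet N).filter (fun z => z % 1 = r)).card).choose 2 = N.choose 2 := by
    rw [Finset.sum_range_one]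
    congr 1
    have : (l.betaSet N).filter (fun z => z % 1 = 0) = l.betaSet N := by
      apply Finset.filter_true_of_mem
      intro z _
      omega
    rw [this, card_betaSet]
  have h3 : ∑ x ∈ l.betaSet N, x / 1 = ∑ x ∈ l.betaSet N, x := by
    apply Finset.sum_congr rfl
    intro x _
    exact Nat.div_one x
  have h4 := sum_betaSet l hN
  rw [h1, h2, h3, h4] at hf
  omega

theorem stmt_7 (n t : ℕ) (h1 : 2 ^ t ≤ n) (h2 : n < 2 ^ (t + 1))
    (l : SeqPartition) (hl : l.size = n) :
    l.IsOdd ↔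
      ((∃! p : ℕ × ℕ, p.2 < l.parts p.1 ∧ l.hookLength p.1 p.2 = 2 ^ t) ∧
       ∃ m : SeqPartition, RemoveHook l m (2 ^ t) ∧ m.size = n - 2 ^ t ∧ m.IsOdd) := by
  classical
  have h2t : 0 < (2:ℕ) ^ t := pow_pos (by omega) t
  have h2t1 : (2:ℕ) ^ (t + 1) = 2 ^ t * 2 := pow_succ 2 t
  have hdivt : n / 2 ^ t = 1 := by
    have hle : 1 ≤ n / 2 ^ t := (Nat.le_div_iff_mul_le h2t).2 (by omega)
    have hlt : n / 2 ^ t < 2 := by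
      rw [Nat.div_lt_iff_lt_mul h2t]
      omega
    omega
  constructor
  · intro hodd
    obtain ⟨N0, hN0⟩ := l.finite
    have hcrit := (isOdd_iff l hN0).1 hodd
    have hHt : (hooksD l N0 (2 ^ t)).card = 1 := by
      rcases Nat.eq_zero_or_pos t with ht0 | ht0
      · subst ht0
        simp only [pow_zero]
        have hc1 : hooksD l N0 1 = cells l N0 := by
          apply Finset.filter_true_of_mem
          intro p _
          exact one_dvd _
        rw [hc1, card_cells l hN0, hl]
        simp only [pow_zero] at hdivt
        omega
      · rw [hcrit t ht0, hl, hdivt]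
    obtain ⟨p0, hp0⟩ := Finset.card_eq_one.1 hHt
    have hp0mem : p0 ∈ hooksD l N0 (2 ^ t) := by
      rw [hp0]; exact Finset.mem_singleton_self p0
    have hp0c : p0 ∈ cells l N0 := (Finset.mem_filter.1 hp0mem).1
    have hp0d : 2 ^ t ∣ l.hookLength p0.1 p0.2 := (Finset.mem_filter.1 hp0mem).2
    have hhook_le : l.hookLength p0.1 p0.2 ≤ n := hl ▸ hook_le_size l hN0 hp0c
    have hhook_pos := hook_pos l hN0 hp0c
    have hp0h : l.hookLength p0.1 p0.2 = 2 ^ t := by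
      obtain ⟨c, hc⟩ := hp0d
      have hcases : c = 0 ∨ c = 1 ∨ 2 ≤ c := by omega
      rcases hcases with hc0 | hc1 | hc2
      · rw [hc0, Nat.mul_zero] at hc
        omega
      · rw [hc, hc1, Nat.mul_one]
      · have hge := Nat.mul_le_mul_left (2 ^ t) hc2
        omega
    have hexu : ∃! p : ℕ × ℕ, p.2 < l.parts p.1 ∧ l.hookLength p.1 p.2 = 2 ^ t := by
      refine ⟨p0, ⟨(mem_cells l hN0).1 hp0c, hp0h⟩, ?_⟩
      rintro q ⟨hq1, hq2⟩
      have hqmem : q ∈ hooksD l N0 (2 ^ t) :=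
        Finset.mem_filter.2 ⟨(mem_cells l hN0).2 hq1, hq2 ▸ dvd_refl _⟩
      rw [hp0] at hqmem
      exact Finset.mem_singleton.1 hqmem
    have hj := (mem_cells l hN0).1 hp0c
    have hi : p0.1 < N0 := parts_pos_lt l hN0 (by omega)
    obtain ⟨hhe, hhlt⟩ := hook_eq l hN0 hi hj
    set x := bb l N0 p0.1 with hxdef
    set y := ff l N0 p0.2 with hydef
    have hxB : x ∈ l.betaSet N0 := (mem_betaSet l).2 ⟨p0.1, hi, rfl⟩
    have hyB : y ∉ l.betaSet N0 := ff_notMem l hN0 p0.2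
    have hxy : x - y = 2 ^ t := by rw [← hp0h, hhe]
    have hle2 : 2 ^ t ≤ x := by omega
    have hyx : x - 2 ^ t = y := by omega
    have hxhB : x - 2 ^ t ∉ l.betaSet N0 := by rw [hyx]; exact hyB
    have hN0pos : 0 < N0 := by
      have := card_betaSet l N0
      have := Finset.card_pos.2 ⟨x, hxB⟩
      omega
    have hcardins : (insert (x - 2 ^ t) ((l.betaSet N0).erase x)).card = N0 := by
      have hnotin : x - 2 ^ t ∉ (l.betaSet N0).erase x :=
        fun hcon => hxhB (Finset.mem_of_mem_erase hcon)
      rw [Finset.card_insert_of_notMem hnotin, Finset.card_erase_of_mem hxB,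
        card_betaSet]
      omega
    obtain ⟨m, hmN, hmB⟩ := partition_of_betaSet _ hcardins
    have hrem : RemoveHook l m (2 ^ t) := ⟨N0, hN0, hmN, x, hxB, hle2, hxhB, hmB⟩
    have hsz := size_transfer l m hN0 hmN hxB hle2 hxhB hmB
    have hszm : m.size = n - 2 ^ t := by rw [hsz.1, hl]
    refine ⟨hexu, m, hrem, hszm, ?_⟩
    rw [isOdd_iff m hmN]
    intro k hk
    have h2k : 0 < (2:ℕ) ^ k := pow_pos (by omega) k
    rw [hszm]
    by_cases hkt : k ≤ t
    · have hdvd : (2:ℕ) ^ k ∣ 2 ^ t := pow_dvd_pow 2 hkt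
      have htr := transfer l m hN0 hmN h2k hdvd hxB hle2 hxhB hmB
      have hHl : (hooksD l N0 (2 ^ k)).card = n / 2 ^ k := by rw [hcrit k hk, hl]
      have hpow : (2:ℕ) ^ t / 2 ^ k = 2 ^ (t - k) := Nat.pow_div hkt (by omega)
      have hsplit : n / 2 ^ k = (n - 2 ^ t) / 2 ^ k + 2 ^ (t - k) := by
        have hp2 : (2:ℕ) ^ t = 2 ^ (t - k) * 2 ^ k := by
          rw [← pow_add]
          congr 1
          omega
        have hn : (n - 2 ^ t) + 2 ^ (t - k) * 2 ^ k = n := by omega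
        have hd := Nat.add_mul_div_right (n - 2 ^ t) (2 ^ (t - k)) h2k
        rw [hn] at hd
        exact hd
      omega
    · have hmle := hooksD_le_div m hmN (d := 2 ^ k) h2k
      rw [hszm] at hmle
      have hklt : (2:ℕ) ^ (t + 1) ≤ 2 ^ k := Nat.pow_le_pow_right (by omega) (by omega)
      have hz : (n - 2 ^ t) / 2 ^ k = 0 := Nat.div_eq_of_lt (by omega)
      omega
  · rintro ⟨_, m, hrem, hmsz, hmodd⟩
    obtain ⟨N, hN, hmN, x, hxB, hhx, hxh, hB⟩ := hrem
    rw [isOdd_iff l hN]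
    intro k hk
    have h2k : 0 < (2:ℕ) ^ k := pow_pos (by omega) k
    have hcritm := (isOdd_iff m hmN).1 hmodd
    rw [hl]
    by_cases hkt : k ≤ t
    · have hdvd : (2:ℕ) ^ k ∣ 2 ^ t := pow_dvd_pow 2 hkt
      have htr := transfer l m hN hmN h2k hdvd hxB hhx hxh hB
      have hHm : (hooksD m N (2 ^ k)).card = (n - 2 ^ t) / 2 ^ k := by
        rw [hcritm k hk, hmsz]
      have hpow : (2:ℕ) ^ t / 2 ^ k = 2 ^ (t - k) := Nat.pow_div hkt (by omega)
      have hsplit : n / 2 ^ k = (n - 2 ^ t) / 2 ^ k + 2 ^ (t - k) := by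
        have hp2 : (2:ℕ) ^ t = 2 ^ (t - k) * 2 ^ k := by
          rw [← pow_add]
          congr 1
          omega
        have hn : (n - 2 ^ t) + 2 ^ (t - k) * 2 ^ k = n := by omega
        have hd := Nat.add_mul_div_right (n - 2 ^ t) (2 ^ (t - k)) h2k
        rw [hn] at hd
        exact hd
      omega
    · have hle := hooksD_le_div l hN (d := 2 ^ k) h2k
      rw [hl] at hle
      have hklt : (2:ℕ) ^ (t + 1) ≤ 2 ^ k := Nat.pow_le_pow_right (by omega) (by omega)
      have hz : n / 2 ^ k = 0 := Nat.div_eq_of_lt (by omega)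
      omega
end

section
/- Let λ be a partition of n − 2^k and μ a partition of n. Then λ is obtained from μ by removing a 2^k-hook if and only if: the 2-core towers of λ and μ agree in rows 0 through k−1, and the k-th rows of their 2-quotient towers agree except in one position i ∈ {0,...,2^k − 1}, where λ_i^{(k)} is obtained from μ_i^{(k)} by removing a single node (1-hook). -/
/-- A partition, given by its weakly decreasing sequence of parts (eventually zero). -/
structure PartitionSeq where
  parts : ℕ → ℕ
  antitone : Antitone parts
  finite : ∃ N, parts N = 0

namespace PartitionSeq

/-- The size `|λ|` of a partition: the sum of its parts. -/
noncomputable def size (l : PartitionSeq) : ℕ := ∑ᶠ i, l.parts i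

/-- The parts of the conjugate partition. -/
noncomputable def conjParts (l : PartitionSeq) (j : ℕ) : ℕ := Nat.card {i : ℕ | j < l.parts i}

/-- The hook length of the cell `(i,j)` (0-indexed) of a partition. -/
noncomputable def hookLength (l : PartitionSeq) (i j : ℕ) : ℕ :=
  (l.parts i - j) + (l.conjParts j - i) - 1

/-- The degree of the irreducible character of the symmetric group labelled by `l`,
via the hook length formula. -/
noncomputable def degree (l : PartitionSeq) : ℕ :=
  (l.size).factorial / ∏ᶠ (p : ℕ × ℕ) (_ : p.2 < l.parts p.1), l.hookLength p.1 p.2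

/-- A partition is odd if the corresponding irreducible character of the symmetric
group has odd degree. -/
noncomputable def IsOdd (l : PartitionSeq) : Prop := Odd l.degree

/-- A hook partition: all parts beyond the first are at most 1. -/
def IsHook (l : PartitionSeq) : Prop := ∀ i, 1 ≤ i → l.parts i ≤ 1

/-- The beta-set (set of first-column hook lengths) of `l` computed with `N` beads. -/
def betaSet (l : PartitionSeq) (N : ℕ) : Finset ℕ :=
  (Finset.range N).image (fun i => l.parts i + (N - 1 - i))

/-- `RemoveHook l m h` : `m` is obtained from `l` by removing a hook of length `h`,
expressed via beta-sets. -/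
def RemoveHook (l m : PartitionSeq) (h : ℕ) : Prop :=
  ∃ N, l.parts N = 0 ∧ m.parts N = 0 ∧
    ∃ x ∈ l.betaSet N, h ≤ x ∧ x - h ∉ l.betaSet N ∧
      m.betaSet N = insert (x - h) ((l.betaSet N).erase x)

/-- `IsECore e l c` : `c` is the `e`-core of `l`, i.e. it is obtained from `l` by
successively removing `e`-hooks and has no `e`-hook. -/
def IsECore (e : ℕ) (l c : PartitionSeq) : Prop :=
  Relation.ReflTransGen (fun a b => RemoveHook a b e) l c ∧ ∀ b, ¬ RemoveHook c b e

/-- `IsQuotient2 l l0 l1` : `(l0, l1)` is the 2-quotient of `l`, via the parity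
splitting of a beta-set with an even number of beads. -/
def IsQuotient2 (l l0 l1 : PartitionSeq) : Prop :=
  ∃ N, Even N ∧ l.parts N = 0 ∧
    l0.parts ((l.betaSet N).filter (fun x => x % 2 = 0)).card = 0 ∧
    l1.parts ((l.betaSet N).filter (fun x => x % 2 = 1)).card = 0 ∧
    l0.betaSet ((l.betaSet N).filter (fun x => x % 2 = 0)).card
      = ((l.betaSet N).filter (fun x => x % 2 = 0)).image (fun x => x / 2) ∧
    l1.betaSet ((l.betaSet N).filter (fun x => x % 2 = 1)).card
      = ((l.betaSet N).filter (fun x => x % 2 = 1)).image (fun x => x / 2)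

/-- `IsQuotRow k l f` : `f 0, …, f (2^k - 1)` is the `k`-th row of the 2-quotient
tower of `l`. -/
def IsQuotRow : ℕ → PartitionSeq → (ℕ → PartitionSeq) → Prop
  | 0, l, f => f 0 = l
  | k + 1, l, f => ∃ g : ℕ → PartitionSeq, IsQuotRow k l g ∧
      ∀ i < 2 ^ k, IsQuotient2 (g i) (f (2 * i)) (f (2 * i + 1))

/-- `DGood d l` : `|l| ≡ 2^d - 1 (mod 2^(d+1))` and the `2^d`-core of `l` is a hook
partition. -/
def DGood (d : ℕ) (l : PartitionSeq) : Prop :=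
  l.size % 2 ^ (d + 1) = 2 ^ d - 1 ∧
  ∃ c : PartitionSeq, IsECore (2 ^ d) l c ∧ c.IsHook

theorem parts_zero_mono {l : PartitionSeq} {N M : ℕ} (h : N ≤ M) (h0 : l.parts N = 0) :
    l.parts M = 0 := Nat.le_zero.mp (h0 ▸ l.antitone h)

theorem ext' {a b : PartitionSeq} (h : a.parts = b.parts) : a = b := by
  cases a; cases b; simp_all

theorem mem_betaSet {l : PartitionSeq} {N x : ℕ} :
    x ∈ l.betaSet N ↔ ∃ i, i < N ∧ l.parts i + (N - 1 - i) = x := by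
  simp [betaSet]

theorem card_betaSet (l : PartitionSeq) (N : ℕ) : (l.betaSet N).card = N := by
  rw [betaSet, Finset.card_image_of_injOn, Finset.card_range]
  intro i hi j hj hij
  simp only [Finset.coe_range, Set.mem_Iio] at hi hj
  have hij' : l.parts i + (N - 1 - i) = l.parts j + (N - 1 - j) := hij
  rcases lt_trichotomy i j with h | h | h
  · have := l.antitone h.le; omega
  · exact h
  · have := l.antitone h.le; omega

theorem betaSet_succ {l : PartitionSeq} {N : ℕ} (h0 : l.parts N = 0) :
    l.betaSet (N + 1) = insert 0 ((l.betaSet N).image (· + 1)) := by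
  ext x
  simp only [mem_betaSet, Finset.mem_insert, Finset.mem_image]
  constructor
  · rintro ⟨i, hi, rfl⟩
    rcases Nat.lt_or_ge i N with h | h
    · right; exact ⟨l.parts i + (N - 1 - i), ⟨i, h, rfl⟩, by omega⟩
    · left
      have hiN : i = N := by omega
      subst hiN; simp [h0]
  · rintro (rfl | ⟨y, ⟨i, hi, rfl⟩, rfl⟩)
    · exact ⟨N, by omega, by simp [h0]⟩
    · exact ⟨i, by omega, by omega⟩

/-- The `j`-th smallest element of `S` (0-indexed), or `0` out of range. -/
noncomputable def nth (S : Finset ℕ) (j : ℕ) : ℕ :=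
  if h : j < S.card then S.orderEmbOfFin rfl ⟨j, h⟩ else 0

theorem nth_lt_nth (S : Finset ℕ) {i j : ℕ} (hij : i < j) (hj : j < S.card) :
    nth S i < nth S j := by
  have hi : i < S.card := hij.trans hj
  rw [nth, dif_pos hi, nth, dif_pos hj]
  exact (S.orderEmbOfFin rfl).strictMono (show (⟨i, hi⟩ : Fin S.card) < ⟨j, hj⟩ from hij)

theorem nth_mem (S : Finset ℕ) {j : ℕ} (hj : j < S.card) : nth S j ∈ S := by
  rw [nth, dif_pos hj]; exact Finset.orderEmbOfFin_mem S rfl ⟨j, hj⟩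

theorem nth_surj (S : Finset ℕ) {x : ℕ} (hx : x ∈ S) : ∃ j, j < S.card ∧ nth S j = x := by
  have : x ∈ Set.range (S.orderEmbOfFin rfl) := by
    rw [Finset.range_orderEmbOfFin]; exact hx
  obtain ⟨j, hj⟩ := this
  exact ⟨j, j.2, by rw [nth, dif_pos j.2]; rw [← hj]⟩

theorem nth_ge (S : Finset ℕ) : ∀ j, j < S.card → j ≤ nth S j := by
  intro j
  induction j with
  | zero => intro _; exact Nat.zero_le _
  | succ k ih =>
    intro h
    have h1 := ih (by omega)
    have h2 := nth_lt_nth S (show k < k + 1 by omega) h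
    omega

theorem nth_gap (S : Finset ℕ) {i j : ℕ} (hij : i ≤ j) (hj : j < S.card) :
    nth S i + (j - i) ≤ nth S j := by
  induction j with
  | zero => have : i = 0 := by omega
            subst this; omega
  | succ k ih =>
    rcases Nat.lt_or_ge i (k + 1) with h | h
    · have h1 := ih (by omega) (by omega)
      have h2 := nth_lt_nth S (show k < k + 1 by omega) hj
      omega
    · have : i = k + 1 := by omega
      subst this; omega

theorem nth_unique (S : Finset ℕ) (g : ℕ → ℕ) {N : ℕ} (hcard : S.card = N)
    (hmem : ∀ j, j < N → g j ∈ S) (hmono : ∀ i j, i < j → j < N → g i < g j) :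
    ∀ j, j < N → g j = nth S j := by
  have hkey := Finset.orderEmbOfFin_unique (f := fun j : Fin S.card => g j.val) rfl
    (fun x => hmem x.val (hcard ▸ x.2))
    (fun a b hab => hmono a.val b.val hab (hcard ▸ b.2))
  intro j hj
  have hj' : j < S.card := hcard ▸ hj
  have := congrFun hkey ⟨j, hj'⟩
  simp only at this
  rw [nth, dif_pos hj', ← this]

/-- The partition whose beta-set with `S.card` beads is `S`. -/
noncomputable def ofFinset (S : Finset ℕ) : PartitionSeq where
  parts i := if i < S.card then nth S (S.card - 1 - i) - (S.card - 1 - i) else 0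
  antitone := by
    intro i j hij
    dsimp only
    split_ifs with hj hi hi
    · have h1 := nth_gap S (show S.card - 1 - j ≤ S.card - 1 - i by omega) (by omega)
      have h2 := nth_ge S (S.card - 1 - j) (by omega)
      omega
    · omega
    · omega
    · omega
  finite := ⟨S.card, if_neg (lt_irrefl _)⟩

theorem ofFinset_parts_card (S : Finset ℕ) : (ofFinset S).parts S.card = 0 :=
  if_neg (lt_irrefl _)

theorem ofFinset_parts_zero {S : Finset ℕ} {N : ℕ} (h : S.card ≤ N) :
    (ofFinset S).parts N = 0 := parts_zero_mono h (ofFinset_parts_card S)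

theorem betaSet_ofFinset (S : Finset ℕ) : (ofFinset S).betaSet S.card = S := by
  ext x
  simp only [mem_betaSet]
  constructor
  · rintro ⟨i, hi, rfl⟩
    have hp : (ofFinset S).parts i = nth S (S.card - 1 - i) - (S.card - 1 - i) := if_pos hi
    have hge := nth_ge S (S.card - 1 - i) (by omega)
    have : (ofFinset S).parts i + (S.card - 1 - i) = nth S (S.card - 1 - i) := by
      rw [hp]; omega
    rw [this]
    exact nth_mem S (by omega)
  · intro hx
    obtain ⟨j, hj, hjx⟩ := nth_surj S hx
    refine ⟨S.card - 1 - j, by omega, ?_⟩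
    have heq : S.card - 1 - (S.card - 1 - j) = j := by omega
    have hp : (ofFinset S).parts (S.card - 1 - j)
        = nth S (S.card - 1 - (S.card - 1 - j)) - (S.card - 1 - (S.card - 1 - j)) :=
      if_pos (by omega)
    rw [hp, heq, hjx]
    have hge := nth_ge S j hj
    omega

theorem bead_eq_nth {l : PartitionSeq} {N : ℕ} (h0 : l.parts N = 0) {i : ℕ} (hi : i < N) :
    l.parts i + (N - 1 - i) = nth (l.betaSet N) (N - 1 - i) := by
  have := nth_unique (l.betaSet N) (fun j => l.parts (N - 1 - j) + j) (card_betaSet l N)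
    (fun j hj => by
      rw [mem_betaSet]
      refine ⟨N - 1 - j, by omega, ?_⟩
      have h2 : N - 1 - (N - 1 - j) = j := by omega
      rw [h2])
    (fun a b hab hb => by
      have := l.antitone (show N - 1 - b ≤ N - 1 - a by omega)
      omega)
    (N - 1 - i) (by omega)
  rw [← this]
  have hNi : N - 1 - (N - 1 - i) = i := by omega
  rw [hNi]

theorem eq_of_betaSet_eq {a b : PartitionSeq} {N : ℕ} (ha : a.parts N = 0) (hb : b.parts N = 0)
    (h : a.betaSet N = b.betaSet N) : a = b := by
  apply ext'
  funext i
  rcases Nat.lt_or_ge i N with hi | hi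
  · have h1 := bead_eq_nth ha hi
    have h2 := bead_eq_nth hb hi
    rw [h] at h1
    omega
  · rw [parts_zero_mono hi ha, parts_zero_mono hi hb]

def RemoveHookAt (a b : PartitionSeq) (h N : ℕ) : Prop :=
  a.parts N = 0 ∧ b.parts N = 0 ∧
    ∃ x ∈ a.betaSet N, h ≤ x ∧ x - h ∉ a.betaSet N ∧
      b.betaSet N = insert (x - h) ((a.betaSet N).erase x)

theorem removeHook_iff {a b : PartitionSeq} {h : ℕ} :
    RemoveHook a b h ↔ ∃ N, RemoveHookAt a b h N := Iff.rfl

theorem RemoveHookAt.pos {a b : PartitionSeq} {h N : ℕ} (H : RemoveHookAt a b h N) : 0 < h := by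
  obtain ⟨_, _, x, hx, _, hnx, _⟩ := H
  by_contra h0
  have : h = 0 := by omega
  subst this
  simp at hnx
  exact hnx hx

theorem RemoveHookAt.succ {a b : PartitionSeq} {h N : ℕ} (H : RemoveHookAt a b h N) :
    RemoveHookAt a b h (N + 1) := by
  obtain ⟨ha, hb, x, hx, hhx, hnx, hS⟩ := H
  have hpos : 0 < h := RemoveHookAt.pos ⟨ha, hb, x, hx, hhx, hnx, hS⟩
  refine ⟨parts_zero_mono (by omega) ha, parts_zero_mono (by omega) hb,
    x + 1, ?_, by omega, ?_, ?_⟩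
  · rw [betaSet_succ ha]
    simp only [Finset.mem_insert, Finset.mem_image]
    exact Or.inr ⟨x, hx, rfl⟩
  · rw [betaSet_succ ha]
    simp only [Finset.mem_insert, Finset.mem_image]
    rintro (h0 | ⟨y, hy, hy1⟩)
    · omega
    · have : y = x - h := by omega
      subst this; exact hnx hy
  · rw [betaSet_succ ha, betaSet_succ hb, hS]
    have h1 : x + 1 - h = (x - h) + 1 := by omega
    rw [h1]
    rw [Finset.image_insert]
    rw [Finset.image_erase (add_left_injective 1)]
    rw [Finset.insert_comm]
    congr 1
    rw [Finset.erase_insert_of_ne (by omega : (0:ℕ) ≠ x + 1)]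

theorem RemoveHookAt.mono {a b : PartitionSeq} {h N M : ℕ} (hNM : N ≤ M)
    (H : RemoveHookAt a b h N) : RemoveHookAt a b h M := by
  induction M with
  | zero => have : N = 0 := by omega
            subst this; exact H
  | succ k ih =>
    rcases Nat.lt_or_ge k N with hlt | hge
    · have : N = k + 1 := by omega
      subst this; exact H
    · exact (ih hge).succ

theorem size_eq_range_sum {l : PartitionSeq} {N : ℕ} (h0 : l.parts N = 0) :
    l.size = ∑ i ∈ Finset.range N, l.parts i := by
  apply finsum_eq_sum_of_support_subset
  intro i hi
  simp only [Function.mem_support] at hi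
  simp only [Finset.coe_range, Set.mem_Iio]
  by_contra hc
  exact hi (parts_zero_mono (by omega) h0)

theorem sum_betaSet {l : PartitionSeq} {N : ℕ} (h0 : l.parts N = 0) :
    ∑ x ∈ l.betaSet N, x = l.size + ∑ i ∈ Finset.range N, i := by
  rw [betaSet, Finset.sum_image, size_eq_range_sum h0]
  · rw [Finset.sum_add_distrib, Finset.sum_range_reflect (fun i => (i : ℕ)) N]
  · intro i hi j hj hij
    simp only [Finset.coe_range, Set.mem_Iio] at hi hj
    simp only at hij
    rcases lt_trichotomy i j with h | h | h
    · have := l.antitone h.le; omega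
    · exact h
    · have := l.antitone h.le; omega

theorem RemoveHookAt.size_eq {a b : PartitionSeq} {h N : ℕ} (H : RemoveHookAt a b h N) :
    a.size = b.size + h := by
  obtain ⟨ha, hb, x, hx, hhx, hnx, hS⟩ := H
  have hpos : 0 < h := RemoveHookAt.pos ⟨ha, hb, x, hx, hhx, hnx, hS⟩
  have h1 := sum_betaSet ha
  have h2 := sum_betaSet hb
  rw [hS] at h2
  have hxe : x - h ∉ (a.betaSet N).erase x := fun hc => hnx (Finset.mem_of_mem_erase hc)
  rw [Finset.sum_insert hxe] at h2
  have h3 := Finset.sum_erase_add (a.betaSet N) (fun y => y) hx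
  omega

/-! ### Parity counts and the 2-core invariant -/

noncomputable def oddCount (l : PartitionSeq) (N : ℕ) : ℕ :=
  ((l.betaSet N).filter (fun x => x % 2 = 1)).card

noncomputable def evenCount (l : PartitionSeq) (N : ℕ) : ℕ :=
  ((l.betaSet N).filter (fun x => x % 2 = 0)).card

theorem evenCount_add_oddCount (l : PartitionSeq) (N : ℕ) :
    evenCount l N + oddCount l N = N := by
  rw [evenCount, oddCount]
  have h1 : (l.betaSet N).filter (fun x => x % 2 = 1)
      = (l.betaSet N).filter (fun x => ¬ (x % 2 = 0)) := by
    apply Finset.filter_congr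
    intro x _
    omega
  rw [h1, Finset.card_filter_add_card_filter_not, card_betaSet]

theorem betaSet_add_two {l : PartitionSeq} {N : ℕ} (h0 : l.parts N = 0) :
    l.betaSet (N + 2) = insert 0 (insert 1 ((l.betaSet N).image (· + 2))) := by
  have h1 : l.parts (N + 1) = 0 := parts_zero_mono (by omega) h0
  rw [betaSet_succ h1, betaSet_succ h0]
  ext x
  simp only [Finset.mem_insert, Finset.mem_image]
  constructor
  · rintro (rfl | ⟨y, (rfl | ⟨z, hz, rfl⟩), rfl⟩)
    · left; rfl
    · right; left; rfl
    · right; right; exact ⟨z, hz, rfl⟩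
  · rintro (rfl | rfl | ⟨z, hz, rfl⟩)
    · left; rfl
    · right; exact ⟨0, Or.inl rfl, rfl⟩
    · right; exact ⟨z + 1, Or.inr ⟨z, hz, rfl⟩, rfl⟩

theorem oddCount_add_two {l : PartitionSeq} {N : ℕ} (h0 : l.parts N = 0) :
    oddCount l (N + 2) = oddCount l N + 1 := by
  rw [oddCount, oddCount, betaSet_add_two h0]
  have h1 : (insert 0 (insert 1 ((l.betaSet N).image (· + 2)))).filter (fun x => x % 2 = 1)
      = insert 1 (((l.betaSet N).filter (fun x => x % 2 = 1)).image (· + 2)) := by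
    ext x
    simp only [Finset.mem_filter, Finset.mem_insert, Finset.mem_image]
    constructor
    · rintro ⟨(rfl | rfl | ⟨z, hz, rfl⟩), hpar⟩
      · omega
      · left; rfl
      · right; exact ⟨z, ⟨hz, by omega⟩, rfl⟩
    · rintro (rfl | ⟨z, ⟨hz, hpar⟩, rfl⟩)
      · exact ⟨Or.inr (Or.inl rfl), rfl⟩
      · exact ⟨Or.inr (Or.inr ⟨z, hz, rfl⟩), by omega⟩
  rw [h1, Finset.card_insert_of_notMem, Finset.card_image_of_injective _ (add_left_injective 2)]
  simp only [Finset.mem_image, Finset.mem_filter]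
  rintro ⟨z, _, hz⟩
  omega

theorem evenCount_add_two {l : PartitionSeq} {N : ℕ} (h0 : l.parts N = 0) :
    evenCount l (N + 2) = evenCount l N + 1 := by
  have h1 := evenCount_add_oddCount l (N + 2)
  have h2 := evenCount_add_oddCount l N
  have h3 := oddCount_add_two h0
  omega

theorem oddCount_of_le {l : PartitionSeq} {N M : ℕ} (h0 : l.parts N = 0) (hNM : N ≤ M)
    (hpar : N % 2 = M % 2) : oddCount l M = oddCount l N + (M - N) / 2 := by
  obtain ⟨d, hd⟩ : ∃ d, M = N + 2 * d := ⟨(M - N) / 2, by omega⟩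
  subst hd
  induction d with
  | zero =>
    rw [show N + 2 * 0 = N from by omega]
    omega
  | succ k ih =>
    have hk : N + 2 * (k + 1) = (N + 2 * k) + 2 := by omega
    rw [hk, oddCount_add_two (parts_zero_mono (by omega) h0)]
    rw [ih (by omega) (by omega)]
    omega

def SameInv (a b : PartitionSeq) : Prop :=
  ∀ N, Even N → a.parts N = 0 → b.parts N = 0 → oddCount a N = oddCount b N

theorem sameInv_refl (a : PartitionSeq) : SameInv a a := fun _ _ _ _ => rfl

theorem SameInv.symm {a b : PartitionSeq} (h : SameInv a b) : SameInv b a :=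
  fun N hN ha hb => (h N hN hb ha).symm

theorem exists_common_zero (a b : PartitionSeq) :
    ∃ N, Even N ∧ a.parts N = 0 ∧ b.parts N = 0 := by
  obtain ⟨Na, hNa⟩ := a.finite
  obtain ⟨Nb, hNb⟩ := b.finite
  exact ⟨2 * (Na + Nb), ⟨Na + Nb, by omega⟩,
    parts_zero_mono (by omega) hNa, parts_zero_mono (by omega) hNb⟩

theorem sameInv_of_exists {a b : PartitionSeq}
    (h : ∃ N, Even N ∧ a.parts N = 0 ∧ b.parts N = 0 ∧ oddCount a N = oddCount b N) :
    SameInv a b := by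
  obtain ⟨N0, hN0e, ha0, hb0, heq⟩ := h
  intro N hNe ha hb
  obtain ⟨u, hu⟩ := hNe
  obtain ⟨v, hv⟩ := hN0e
  rcases le_or_gt N0 N with hle | hlt
  · rw [oddCount_of_le ha0 hle (by omega), oddCount_of_le hb0 hle (by omega), heq]
  · have h1 := oddCount_of_le ha hlt.le (by omega)
    have h2 := oddCount_of_le hb hlt.le (by omega)
    omega

theorem SameInv.trans {a b c : PartitionSeq} (h1 : SameInv a b) (h2 : SameInv b c) :
    SameInv a c := by
  obtain ⟨Na, hNa⟩ := a.finite
  obtain ⟨Nb, hNb⟩ := b.finite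
  obtain ⟨Nc, hNc⟩ := c.finite
  set N := 2 * (Na + Nb + Nc) with hN
  have he : Even N := ⟨Na + Nb + Nc, by omega⟩
  have ha : a.parts N = 0 := parts_zero_mono (by omega) hNa
  have hb : b.parts N = 0 := parts_zero_mono (by omega) hNb
  have hc : c.parts N = 0 := parts_zero_mono (by omega) hNc
  exact sameInv_of_exists ⟨N, he, ha, hc, (h1 N he ha hb).trans (h2 N he hb hc)⟩

theorem card_filter_insert_erase {S : Finset ℕ} {x u : ℕ} (p : ℕ → Prop) [DecidablePred p]
    (hx : x ∈ S) (hu : u ∉ S) (hpu : p u ↔ p x) :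
    ((insert u (S.erase x)).filter p).card = (S.filter p).card := by
  have hune : u ≠ x := fun h => hu (h ▸ hx)
  rw [Finset.filter_insert]
  by_cases hp : p x
  · have hx' : x ∈ S.filter p := Finset.mem_filter.mpr ⟨hx, hp⟩
    rw [if_pos (hpu.mpr hp), Finset.filter_erase,
      Finset.card_insert_of_notMem
        (fun hmem => hu (Finset.mem_of_mem_filter u (Finset.mem_of_mem_erase hmem))),
      Finset.card_erase_of_mem hx']
    have hcard : 0 < (S.filter p).card := Finset.card_pos.mpr ⟨x, hx'⟩
    omega
  · rw [if_neg (fun h => hp (hpu.mp h)), Finset.filter_erase,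
      Finset.erase_eq_of_notMem (fun h => hp (Finset.mem_filter.mp h).2)]

theorem sameInv_of_removeHookAt {a b : PartitionSeq} {h N : ℕ} (hh : h % 2 = 0)
    (H : RemoveHookAt a b h N) : SameInv a b := by
  obtain ⟨d, hd⟩ : ∃ d, N ≤ 2 * d := ⟨N, by omega⟩
  have H2 : RemoveHookAt a b h (2 * d) := H.mono hd
  obtain ⟨ha, hb, x, hx, hhx, hnx, hS⟩ := H2
  apply sameInv_of_exists
  refine ⟨2 * d, ⟨d, by omega⟩, ha, hb, ?_⟩
  rw [oddCount, oddCount, hS]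
  exact (card_filter_insert_erase (fun y => y % 2 = 1) hx hnx (by omega)).symm

/-! ### 2-cores -/

def Closed2 (c : PartitionSeq) (N : ℕ) : Prop :=
  ∀ x ∈ c.betaSet N, 2 ≤ x → x - 2 ∈ c.betaSet N

theorem Closed2.succ {c : PartitionSeq} {N : ℕ} (h0 : c.parts N = 0) (H : Closed2 c N) :
    Closed2 c (N + 1) := by
  intro x hx h2x
  rw [betaSet_succ h0] at hx ⊢
  simp only [Finset.mem_insert, Finset.mem_image] at hx ⊢
  rcases hx with rfl | ⟨y, hy, rfl⟩
  · omega
  · rcases Nat.lt_or_ge y 2 with h | h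
    · left; omega
    · right
      exact ⟨y - 2, H y hy h, by omega⟩

theorem Closed2.mono {c : PartitionSeq} {N M : ℕ} (h0 : c.parts N = 0) (hNM : N ≤ M)
    (H : Closed2 c N) : Closed2 c M := by
  induction M with
  | zero => have : N = 0 := by omega
            subst this; exact H
  | succ k ih =>
    rcases Nat.lt_or_ge k N with hlt | hge
    · have : N = k + 1 := by omega
      subst this; exact H
    · exact (ih hge).succ (parts_zero_mono hge h0)

theorem closed2_of_noHook2 {c : PartitionSeq} {N : ℕ} (h0 : c.parts N = 0)
    (H : ∀ b, ¬ RemoveHook c b 2) : Closed2 c N := by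
  intro x hx h2x
  by_contra hnx
  set S := insert (x - 2) ((c.betaSet N).erase x) with hSdef
  have hNpos : 0 < N := by
    have := Finset.card_pos.mpr ⟨x, hx⟩
    rw [card_betaSet] at this
    exact this
  have hcard : S.card = N := by
    rw [hSdef, Finset.card_insert_of_notMem (fun hm => hnx (Finset.mem_of_mem_erase hm)),
      Finset.card_erase_of_mem hx, card_betaSet]
    omega
  have hbeta : (ofFinset S).betaSet N = S := by rw [← hcard]; exact betaSet_ofFinset S
  have hparts : (ofFinset S).parts N = 0 := by rw [← hcard]; exact ofFinset_parts_card S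
  apply H (ofFinset S)
  refine ⟨N, h0, hparts, x, hx, h2x, hnx, ?_⟩
  rw [hbeta]

theorem noHook2_of_closed2 {c : PartitionSeq} {N : ℕ} (h0 : c.parts N = 0)
    (H : Closed2 c N) : ∀ b, ¬ RemoveHook c b 2 := by
  intro b hb
  obtain ⟨N', hN'⟩ := removeHook_iff.mp hb
  have H2 : RemoveHookAt c b 2 (N + N') := hN'.mono (by omega)
  have HC : Closed2 c (N + N') := H.mono h0 (by omega)  -- careful arg order
  obtain ⟨_, _, x, hx, h2x, hnx, _⟩ := H2
  exact hnx (HC x hx h2x)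

theorem downclosed_eq_range {U : Finset ℕ} (h : ∀ u, u + 1 ∈ U → u ∈ U) :
    U = Finset.range U.card := by
  have hdc : ∀ u, u ∈ U → ∀ v, v ≤ u → v ∈ U := by
    intro u
    induction u with
    | zero => intro hu v hv
              have : v = 0 := by omega
              subst this; exact hu
    | succ k ih =>
      intro hu v hv
      rcases Nat.lt_or_ge v (k + 1) with h1 | h1
      · exact ih (h k hu) v (by omega)
      · have : v = k + 1 := by omega
        subst this; exact hu
  rcases U.eq_empty_or_nonempty with he | hne
  · simp [he]
  · have hU : U = Finset.range (U.max' hne + 1) := by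
      ext y
      simp only [Finset.mem_range]
      constructor
      · intro hy; have := Finset.le_max' U y hy; omega
      · intro hy; exact hdc _ (U.max'_mem hne) y (by omega)
    have hc : U.card = U.max' hne + 1 := by
      conv_lhs => rw [hU]
      rw [Finset.card_range]
    rw [hc]; exact hU

theorem image_double_half_even {T : Finset ℕ} (hT : ∀ x ∈ T, x % 2 = 0) :
    (T.image (fun x => x / 2)).image (fun y => 2 * y) = T := by
  ext x
  simp only [Finset.mem_image]
  constructor
  · rintro ⟨y, ⟨z, hz, rfl⟩, rfl⟩
    have hz2 := hT z hz
    have heq : 2 * (z / 2) = z := by omega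
    rw [heq]; exact hz
  · intro hx
    have := hT x hx
    exact ⟨x / 2, ⟨x, hx, rfl⟩, by omega⟩

theorem image_double_half_odd {T : Finset ℕ} (hT : ∀ x ∈ T, x % 2 = 1) :
    (T.image (fun x => x / 2)).image (fun y => 2 * y + 1) = T := by
  ext x
  simp only [Finset.mem_image]
  constructor
  · rintro ⟨y, ⟨z, hz, rfl⟩, rfl⟩
    have hz2 := hT z hz
    have heq : 2 * (z / 2) + 1 = z := by omega
    rw [heq]; exact hz
  · intro hx
    have := hT x hx
    exact ⟨x / 2, ⟨x, hx, rfl⟩, by omega⟩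

theorem card_image_half {T : Finset ℕ} {r : ℕ} (hT : ∀ x ∈ T, x % 2 = r) :
    (T.image (fun x => x / 2)).card = T.card := by
  rw [Finset.card_image_of_injOn]
  intro x hx y hy hxy
  have h1 := hT x hx
  have h2 := hT y hy
  have hxy' : x / 2 = y / 2 := hxy
  omega

theorem closed2_betaSet_eq {c : PartitionSeq} {N : ℕ} (h0 : c.parts N = 0) (H : Closed2 c N) :
    c.betaSet N = (Finset.range (evenCount c N)).image (fun y => 2 * y)
      ∪ (Finset.range (oddCount c N)).image (fun y => 2 * y + 1) := by
  have hEall : ∀ x ∈ (c.betaSet N).filter (fun x => x % 2 = 0), x % 2 = 0 :=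
    fun x hx => (Finset.mem_filter.mp hx).2
  have hOall : ∀ x ∈ (c.betaSet N).filter (fun x => x % 2 = 1), x % 2 = 1 :=
    fun x hx => (Finset.mem_filter.mp hx).2
  have hUdc : ∀ u, u + 1 ∈ ((c.betaSet N).filter (fun x => x % 2 = 0)).image (fun x => x / 2)
      → u ∈ ((c.betaSet N).filter (fun x => x % 2 = 0)).image (fun x => x / 2) := by
    intro u hu
    simp only [Finset.mem_image, Finset.mem_filter] at hu ⊢
    obtain ⟨x, ⟨hx, hx0⟩, hx2⟩ := hu
    have hxv : x = 2 * u + 2 := by omega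
    have hmem := H x hx (by omega)
    exact ⟨x - 2, ⟨hmem, by omega⟩, by omega⟩
  have hVdc : ∀ u, u + 1 ∈ ((c.betaSet N).filter (fun x => x % 2 = 1)).image (fun x => x / 2)
      → u ∈ ((c.betaSet N).filter (fun x => x % 2 = 1)).image (fun x => x / 2) := by
    intro u hu
    simp only [Finset.mem_image, Finset.mem_filter] at hu ⊢
    obtain ⟨x, ⟨hx, hx0⟩, hx2⟩ := hu
    have hxv : x = 2 * u + 3 := by omega
    have hmem := H x hx (by omega)
    exact ⟨x - 2, ⟨hmem, by omega⟩, by omega⟩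
  have hE2 : (c.betaSet N).filter (fun x => x % 2 = 0)
      = (Finset.range (evenCount c N)).image (fun y => 2 * y) := by
    conv_lhs => rw [← image_double_half_even hEall]
    rw [downclosed_eq_range hUdc, card_image_half hEall]
    rfl
  have hO2 : (c.betaSet N).filter (fun x => x % 2 = 1)
      = (Finset.range (oddCount c N)).image (fun y => 2 * y + 1) := by
    conv_lhs => rw [← image_double_half_odd hOall]
    rw [downclosed_eq_range hVdc, card_image_half hOall]
    rfl
  rw [← hE2, ← hO2]
  ext x
  simp only [Finset.mem_union, Finset.mem_filter]
  constructor
  · intro hx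
    rcases Nat.mod_two_eq_zero_or_one x with h | h
    · left; exact ⟨hx, h⟩
    · right; exact ⟨hx, h⟩
  · rintro (⟨hx, _⟩ | ⟨hx, _⟩) <;> exact hx

theorem noHook2_eq {c c' : PartitionSeq} (h : ∀ b, ¬ RemoveHook c b 2)
    (h' : ∀ b, ¬ RemoveHook c' b 2) (hinv : SameInv c c') : c = c' := by
  obtain ⟨N, hNe, h0, h0'⟩ := exists_common_zero c c'
  apply eq_of_betaSet_eq h0 h0'
  rw [closed2_betaSet_eq h0 (closed2_of_noHook2 h0 h),
    closed2_betaSet_eq h0' (closed2_of_noHook2 h0' h')]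
  have ho := hinv N hNe h0 h0'
  have he1 := evenCount_add_oddCount c N
  have he2 := evenCount_add_oddCount c' N
  have he : evenCount c N = evenCount c' N := by omega
  rw [ho, he]

theorem sameInv_of_removeHook {a b : PartitionSeq} {h : ℕ} (hh : h % 2 = 0)
    (H : RemoveHook a b h) : SameInv a b := by
  obtain ⟨N, hN⟩ := removeHook_iff.mp H
  exact sameInv_of_removeHookAt hh hN

theorem sameInv_of_chain {a c : PartitionSeq}
    (H : Relation.ReflTransGen (fun x y => RemoveHook x y 2) a c) : SameInv a c := by
  induction H with
  | refl => exact sameInv_refl a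
  | tail _ hstep ih => exact ih.trans (sameInv_of_removeHook (by omega) hstep)

theorem exists_core_aux : ∀ (n : ℕ) (a : PartitionSeq), a.size = n →
    ∃ c, Relation.ReflTransGen (fun x y => RemoveHook x y 2) a c ∧ ∀ b, ¬ RemoveHook c b 2 := by
  intro n
  induction n using Nat.strong_induction_on with
  | _ n ih =>
    intro a hs
    by_cases h : ∃ b, RemoveHook a b 2
    · obtain ⟨b, hb⟩ := h
      obtain ⟨N, hN⟩ := removeHook_iff.mp hb
      have hsz := hN.size_eq
      obtain ⟨c, hc1, hc2⟩ := ih b.size (by omega) b rfl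
      exact ⟨c, Relation.ReflTransGen.head hb hc1, hc2⟩
    · exact ⟨a, Relation.ReflTransGen.refl, fun b hb => h ⟨b, hb⟩⟩

theorem exists_core (a : PartitionSeq) : ∃ c, IsECore 2 a c :=
  exists_core_aux a.size a rfl

theorem isECore2_congr {a b c : PartitionSeq} (hinv : SameInv a b) (h : IsECore 2 a c) :
    IsECore 2 b c := by
  obtain ⟨hchain, hno⟩ := h
  obtain ⟨c', hchain', hno'⟩ := exists_core b
  have hcc : c' = c := by
    apply noHook2_eq hno' hno
    exact ((sameInv_of_chain hchain').symm.trans hinv.symm).trans (sameInv_of_chain hchain)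
  subst hcc
  exact ⟨hchain', hno'⟩

theorem sameInv_iff_core_imp (a b : PartitionSeq) :
    SameInv a b ↔ ∀ c, IsECore 2 a c → IsECore 2 b c := by
  constructor
  · intro hinv c hc
    exact isECore2_congr hinv hc
  · intro h
    obtain ⟨c, hc⟩ := exists_core a
    have hbc := h c hc
    exact (sameInv_of_chain hc.1).trans (sameInv_of_chain hbc.1).symm

/-! ### 2-quotients -/

def QuotAt (l l0 l1 : PartitionSeq) (N : ℕ) : Prop :=
  Even N ∧ l.parts N = 0 ∧
    l0.parts (evenCount l N) = 0 ∧ l1.parts (oddCount l N) = 0 ∧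
    l0.betaSet (evenCount l N) = ((l.betaSet N).filter (fun x => x % 2 = 0)).image (fun x => x / 2) ∧
    l1.betaSet (oddCount l N) = ((l.betaSet N).filter (fun x => x % 2 = 1)).image (fun x => x / 2)

theorem isQuotient2_iff {l l0 l1 : PartitionSeq} :
    IsQuotient2 l l0 l1 ↔ ∃ N, QuotAt l l0 l1 N := Iff.rfl

theorem filter_insert01_even (S : Finset ℕ) :
    (insert 0 (insert 1 (S.image (· + 2)))).filter (fun x => x % 2 = 0)
      = insert 0 ((S.filter (fun x => x % 2 = 0)).image (· + 2)) := by
  ext x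
  simp only [Finset.mem_filter, Finset.mem_insert, Finset.mem_image]
  constructor
  · rintro ⟨(rfl | rfl | ⟨z, hz, rfl⟩), hpar⟩
    · left; rfl
    · omega
    · right; exact ⟨z, ⟨hz, by omega⟩, rfl⟩
  · rintro (rfl | ⟨z, ⟨hz, hp⟩, rfl⟩)
    · exact ⟨Or.inl rfl, rfl⟩
    · exact ⟨Or.inr (Or.inr ⟨z, hz, rfl⟩), by omega⟩

theorem filter_insert01_odd (S : Finset ℕ) :
    (insert 0 (insert 1 (S.image (· + 2)))).filter (fun x => x % 2 = 1)
      = insert 1 ((S.filter (fun x => x % 2 = 1)).image (· + 2)) := by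
  ext x
  simp only [Finset.mem_filter, Finset.mem_insert, Finset.mem_image]
  constructor
  · rintro ⟨(rfl | rfl | ⟨z, hz, rfl⟩), hpar⟩
    · omega
    · left; rfl
    · right; exact ⟨z, ⟨hz, by omega⟩, rfl⟩
  · rintro (rfl | ⟨z, ⟨hz, hp⟩, rfl⟩)
    · exact ⟨Or.inr (Or.inl rfl), rfl⟩
    · exact ⟨Or.inr (Or.inr ⟨z, hz, rfl⟩), by omega⟩

theorem image_add_two_half {T : Finset ℕ} :
    (T.image (· + 2)).image (fun x => x / 2) = (T.image (fun x => x / 2)).image (· + 1) := by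
  ext x
  simp only [Finset.mem_image]
  constructor
  · rintro ⟨z, ⟨w, hw, rfl⟩, rfl⟩
    exact ⟨w / 2, ⟨w, hw, rfl⟩, by omega⟩
  · rintro ⟨y, ⟨w, hw, rfl⟩, rfl⟩
    exact ⟨w + 2, ⟨w, hw, rfl⟩, by omega⟩

theorem QuotAt.add_two {l l0 l1 : PartitionSeq} {N : ℕ} (H : QuotAt l l0 l1 N) :
    QuotAt l l0 l1 (N + 2) := by
  obtain ⟨hNe, h0, h00, h10, hb0, hb1⟩ := H
  have hec := evenCount_add_two h0
  have hoc := oddCount_add_two h0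
  obtain ⟨u, hu⟩ := hNe
  refine ⟨⟨u + 1, by omega⟩, parts_zero_mono (by omega) h0, ?_, ?_, ?_, ?_⟩
  · rw [hec]; exact parts_zero_mono (by omega) h00
  · rw [hoc]; exact parts_zero_mono (by omega) h10
  · rw [hec, betaSet_add_two h0, filter_insert01_even, Finset.image_insert,
      image_add_two_half, ← hb0]
    have : (0 : ℕ) / 2 = 0 := rfl
    rw [this, ← betaSet_succ h00]
  · rw [hoc, betaSet_add_two h0, filter_insert01_odd, Finset.image_insert,
      image_add_two_half, ← hb1]
    have : (1 : ℕ) / 2 = 0 := rfl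
    rw [this, ← betaSet_succ h10]

theorem QuotAt.add_two_mul {l l0 l1 : PartitionSeq} {N : ℕ} (H : QuotAt l l0 l1 N) (d : ℕ) :
    QuotAt l l0 l1 (N + 2 * d) := by
  induction d with
  | zero => rw [show N + 2 * 0 = N from by omega]; exact H
  | succ k ih =>
    rw [show N + 2 * (k + 1) = (N + 2 * k) + 2 from by omega]
    exact ih.add_two

theorem QuotAt.mono {l l0 l1 : PartitionSeq} {N M : ℕ} (hNM : N ≤ M) (hMe : Even M)
    (H : QuotAt l l0 l1 N) : QuotAt l l0 l1 M := by
  obtain ⟨u, hu⟩ := hMe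
  obtain ⟨v, hv⟩ := H.1
  obtain ⟨d, hd⟩ : ∃ d, M = N + 2 * d := ⟨(M - N) / 2, by omega⟩
  subst hd
  exact H.add_two_mul d

theorem quot_exists (l : PartitionSeq) : ∃ l0 l1, IsQuotient2 l l0 l1 := by
  obtain ⟨N, hNe, h0, -⟩ := exists_common_zero l l
  have hEall : ∀ x ∈ (l.betaSet N).filter (fun x => x % 2 = 0), x % 2 = 0 :=
    fun x hx => (Finset.mem_filter.mp hx).2
  have hOall : ∀ x ∈ (l.betaSet N).filter (fun x => x % 2 = 1), x % 2 = 1 :=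
    fun x hx => (Finset.mem_filter.mp hx).2
  have hcE := card_image_half hEall
  have hcO := card_image_half hOall
  refine ⟨ofFinset (((l.betaSet N).filter (fun x => x % 2 = 0)).image (fun x => x / 2)),
    ofFinset (((l.betaSet N).filter (fun x => x % 2 = 1)).image (fun x => x / 2)),
    isQuotient2_iff.mpr ⟨N, hNe, h0, ?_, ?_, ?_, ?_⟩⟩
  · rw [evenCount, ← hcE]; exact ofFinset_parts_card _
  · rw [oddCount, ← hcO]; exact ofFinset_parts_card _
  · rw [evenCount, ← hcE]; exact betaSet_ofFinset _
  · rw [oddCount, ← hcO]; exact betaSet_ofFinset _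

theorem quot_unique {l a0 a1 b0 b1 : PartitionSeq} (h1 : IsQuotient2 l a0 a1)
    (h2 : IsQuotient2 l b0 b1) : a0 = b0 ∧ a1 = b1 := by
  obtain ⟨N1, hQ1⟩ := isQuotient2_iff.mp h1
  obtain ⟨N2, hQ2⟩ := isQuotient2_iff.mp h2
  have hMe : Even (max N1 N2) := by
    rcases max_cases N1 N2 with ⟨h, _⟩ | ⟨h, _⟩
    · rw [h]; exact hQ1.1
    · rw [h]; exact hQ2.1
  have hA := hQ1.mono (le_max_left _ _) hMe
  have hB := hQ2.mono (le_max_right _ _) hMe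
  obtain ⟨-, -, ha00, ha10, hab0, hab1⟩ := hA
  obtain ⟨-, -, hb00, hb10, hbb0, hbb1⟩ := hB
  constructor
  · exact eq_of_betaSet_eq ha00 hb00 (hab0.trans hbb0.symm)
  · exact eq_of_betaSet_eq ha10 hb10 (hab1.trans hbb1.symm)

theorem betaSet_eq_of_quotAt {a a0 a1 : PartitionSeq} {N : ℕ} (hQ : QuotAt a a0 a1 N) :
    a.betaSet N = ((a0.betaSet (evenCount a N)).image (fun y => 2 * y))
      ∪ ((a1.betaSet (oddCount a N)).image (fun y => 2 * y + 1)) := by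
  obtain ⟨-, -, -, -, hb0, hb1⟩ := hQ
  have hEall : ∀ x ∈ (a.betaSet N).filter (fun x => x % 2 = 0), x % 2 = 0 :=
    fun x hx => (Finset.mem_filter.mp hx).2
  have hOall : ∀ x ∈ (a.betaSet N).filter (fun x => x % 2 = 1), x % 2 = 1 :=
    fun x hx => (Finset.mem_filter.mp hx).2
  rw [hb0, hb1, image_double_half_even hEall, image_double_half_odd hOall]
  ext x
  simp only [Finset.mem_union, Finset.mem_filter]
  constructor
  · intro hx
    rcases Nat.mod_two_eq_zero_or_one x with h | h
    · left; exact ⟨hx, h⟩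
    · right; exact ⟨hx, h⟩
  · rintro (⟨hx, _⟩ | ⟨hx, _⟩) <;> exact hx

theorem quot_inj {a b a0 a1 : PartitionSeq} (ha : IsQuotient2 a a0 a1)
    (hb : IsQuotient2 b a0 a1) (hinv : SameInv a b) : a = b := by
  obtain ⟨N1, hQ1⟩ := isQuotient2_iff.mp ha
  obtain ⟨N2, hQ2⟩ := isQuotient2_iff.mp hb
  have hMe : Even (max N1 N2) := by
    rcases max_cases N1 N2 with ⟨h, _⟩ | ⟨h, _⟩
    · rw [h]; exact hQ1.1
    · rw [h]; exact hQ2.1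
  have hA := hQ1.mono (le_max_left _ _) hMe
  have hB := hQ2.mono (le_max_right _ _) hMe
  set M := max N1 N2
  have hodd : oddCount a M = oddCount b M := hinv M hMe hA.2.1 hB.2.1
  have heven : evenCount a M = evenCount b M := by
    have h1 := evenCount_add_oddCount a M
    have h2 := evenCount_add_oddCount b M
    omega
  apply eq_of_betaSet_eq hA.2.1 hB.2.1
  rw [betaSet_eq_of_quotAt hA, betaSet_eq_of_quotAt hB, hodd, heven]

/-! ### canonical quotient and step lemmas -/

noncomputable def quot0 (l : PartitionSeq) (N : ℕ) : PartitionSeq :=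
  ofFinset (((l.betaSet N).filter (fun x => x % 2 = 0)).image (fun x => x / 2))

noncomputable def quot1 (l : PartitionSeq) (N : ℕ) : PartitionSeq :=
  ofFinset (((l.betaSet N).filter (fun x => x % 2 = 1)).image (fun x => x / 2))

theorem quotAt_canon {l : PartitionSeq} {N : ℕ} (hNe : Even N) (h0 : l.parts N = 0) :
    QuotAt l (quot0 l N) (quot1 l N) N := by
  have hEall : ∀ x ∈ (l.betaSet N).filter (fun x => x % 2 = 0), x % 2 = 0 :=
    fun x hx => (Finset.mem_filter.mp hx).2
  have hOall : ∀ x ∈ (l.betaSet N).filter (fun x => x % 2 = 1), x % 2 = 1 :=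
    fun x hx => (Finset.mem_filter.mp hx).2
  have hcE := card_image_half hEall
  have hcO := card_image_half hOall
  refine ⟨hNe, h0, ?_, ?_, ?_, ?_⟩
  · rw [evenCount, ← hcE]; exact ofFinset_parts_card _
  · rw [oddCount, ← hcO]; exact ofFinset_parts_card _
  · rw [evenCount, ← hcE]; exact betaSet_ofFinset _
  · rw [oddCount, ← hcO]; exact betaSet_ofFinset _

theorem evenCount_of_le {l : PartitionSeq} {N M : ℕ} (h0 : l.parts N = 0) (hNM : N ≤ M)
    (hpar : N % 2 = M % 2) : evenCount l M = evenCount l N + (M - N) / 2 := by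
  have h1 := oddCount_of_le h0 hNM hpar
  have h2 := evenCount_add_oddCount l M
  have h3 := evenCount_add_oddCount l N
  omega

theorem image_half_insert_erase {T : Finset ℕ} {x u r : ℕ} (hT : ∀ z ∈ T, z % 2 = r)
    (hx : x ∈ T) :
    (insert u (T.erase x)).image (fun z => z / 2)
      = insert (u / 2) ((T.image (fun z => z / 2)).erase (x / 2)) := by
  have hxr := hT x hx
  ext w
  simp only [Finset.mem_image, Finset.mem_insert, Finset.mem_erase]
  constructor
  · rintro ⟨z, (rfl | ⟨hzx, hz⟩), rfl⟩
    · left; rfl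
    · right
      have hzr := hT z hz
      exact ⟨by omega, z, hz, rfl⟩
  · rintro (rfl | ⟨hwx, z, hz, rfl⟩)
    · exact ⟨u, Or.inl rfl, rfl⟩
    · have hzr := hT z hz
      exact ⟨z, Or.inr ⟨by omega, hz⟩, rfl⟩

theorem step_forward {a b : PartitionSeq} {h : ℕ}
    (H : RemoveHook a b (2 * h)) :
    ∃ a0 a1 b0 b1, IsQuotient2 a a0 a1 ∧ IsQuotient2 b b0 b1 ∧
      ((RemoveHook a0 b0 h ∧ b1 = a1) ∨ (b0 = a0 ∧ RemoveHook a1 b1 h)) := by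
  obtain ⟨N0, hRA0⟩ := removeHook_iff.mp H
  have hRA : RemoveHookAt a b (2 * h) (2 * N0) := hRA0.mono (by omega)
  obtain ⟨ha, hb, x, hx, hhx, hnx, hS⟩ := hRA
  have hpos : 0 < h := by
    have := RemoveHookAt.pos ⟨ha, hb, x, hx, hhx, hnx, hS⟩
    omega
  set N := 2 * N0 with hNdef
  have hNe : Even N := ⟨N0, by omega⟩
  have hQa := quotAt_canon hNe ha
  have hQb := quotAt_canon hNe hb
  have hEall : ∀ z ∈ (a.betaSet N).filter (fun x => x % 2 = 0), z % 2 = 0 :=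
    fun z hz => (Finset.mem_filter.mp hz).2
  have hOall : ∀ z ∈ (a.betaSet N).filter (fun x => x % 2 = 1), z % 2 = 1 :=
    fun z hz => (Finset.mem_filter.mp hz).2
  rcases Nat.mod_two_eq_zero_or_one x with hxp | hxp
  · -- x even : hook removed in component 0
    have hxE : x ∈ (a.betaSet N).filter (fun z => z % 2 = 0) :=
      Finset.mem_filter.mpr ⟨hx, hxp⟩
    have hnE : x - 2 * h ∉ (a.betaSet N).filter (fun z => z % 2 = 0) :=
      fun hc => hnx (Finset.mem_filter.mp hc).1
    have hEb : (b.betaSet N).filter (fun z => z % 2 = 0)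
        = insert (x - 2 * h) (((a.betaSet N).filter (fun z => z % 2 = 0)).erase x) := by
      rw [hS]
      ext w
      simp only [Finset.mem_filter, Finset.mem_insert, Finset.mem_erase]
      constructor
      · rintro ⟨(rfl | ⟨hwx, hw⟩), hwp⟩
        · left; rfl
        · right; exact ⟨hwx, hw, hwp⟩
      · rintro (rfl | ⟨hwx, hw, hwp⟩)
        · exact ⟨Or.inl rfl, by omega⟩
        · exact ⟨Or.inr ⟨hwx, hw⟩, hwp⟩
    have hOb : (b.betaSet N).filter (fun z => z % 2 = 1)
        = (a.betaSet N).filter (fun z => z % 2 = 1) := by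
      rw [hS]
      ext w
      simp only [Finset.mem_filter, Finset.mem_insert, Finset.mem_erase]
      constructor
      · rintro ⟨(rfl | ⟨hwx, hw⟩), hwp⟩
        · omega
        · exact ⟨hw, hwp⟩
      · rintro ⟨hw, hwp⟩
        exact ⟨Or.inr ⟨by omega, hw⟩, hwp⟩
    have hb1a1 : quot1 b N = quot1 a N := by rw [quot1, quot1, hOb]
    have hcEb : evenCount b N = evenCount a N := by
      rw [evenCount, evenCount, hEb,
        Finset.card_insert_of_notMem (fun hc => hnE (Finset.mem_of_mem_erase hc)),
        Finset.card_erase_of_mem hxE]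
      have : 0 < ((a.betaSet N).filter (fun z => z % 2 = 0)).card :=
        Finset.card_pos.mpr ⟨x, hxE⟩
      omega
    refine ⟨quot0 a N, quot1 a N, quot0 b N, quot1 b N,
      isQuotient2_iff.mpr ⟨N, hQa⟩, isQuotient2_iff.mpr ⟨N, hQb⟩, Or.inl ⟨?_, hb1a1⟩⟩
    refine removeHook_iff.mpr ⟨evenCount a N, hQa.2.2.1, ?_, x / 2, ?_, by omega, ?_, ?_⟩
    · rw [← hcEb]; exact hQb.2.2.1
    · rw [hQa.2.2.2.2.1]
      exact Finset.mem_image.mpr ⟨x, hxE, rfl⟩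
    · rw [hQa.2.2.2.2.1]
      intro hc
      obtain ⟨z, hz, hz2⟩ := Finset.mem_image.mp hc
      have hzp := hEall z hz
      have hzE : z = x - 2 * h := by omega
      exact hnE (hzE ▸ hz)
    · have hq := hQb.2.2.2.2.1
      rw [hcEb] at hq
      rw [hq, hEb, image_half_insert_erase hEall hxE, ← hQa.2.2.2.2.1]
      have : (x - 2 * h) / 2 = x / 2 - h := by omega
      rw [this]
  · -- x odd : hook removed in component 1
    have hxO : x ∈ (a.betaSet N).filter (fun z => z % 2 = 1) :=
      Finset.mem_filter.mpr ⟨hx, hxp⟩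
    have hnO : x - 2 * h ∉ (a.betaSet N).filter (fun z => z % 2 = 1) :=
      fun hc => hnx (Finset.mem_filter.mp hc).1
    have hOb : (b.betaSet N).filter (fun z => z % 2 = 1)
        = insert (x - 2 * h) (((a.betaSet N).filter (fun z => z % 2 = 1)).erase x) := by
      rw [hS]
      ext w
      simp only [Finset.mem_filter, Finset.mem_insert, Finset.mem_erase]
      constructor
      · rintro ⟨(rfl | ⟨hwx, hw⟩), hwp⟩
        · left; rfl
        · right; exact ⟨hwx, hw, hwp⟩
      · rintro (rfl | ⟨hwx, hw, hwp⟩)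
        · exact ⟨Or.inl rfl, by omega⟩
        · exact ⟨Or.inr ⟨hwx, hw⟩, hwp⟩
    have hEb : (b.betaSet N).filter (fun z => z % 2 = 0)
        = (a.betaSet N).filter (fun z => z % 2 = 0) := by
      rw [hS]
      ext w
      simp only [Finset.mem_filter, Finset.mem_insert, Finset.mem_erase]
      constructor
      · rintro ⟨(rfl | ⟨hwx, hw⟩), hwp⟩
        · omega
        · exact ⟨hw, hwp⟩
      · rintro ⟨hw, hwp⟩
        exact ⟨Or.inr ⟨by omega, hw⟩, hwp⟩
    have hb0a0 : quot0 b N = quot0 a N := by rw [quot0, quot0, hEb]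
    have hcOb : oddCount b N = oddCount a N := by
      rw [oddCount, oddCount, hOb,
        Finset.card_insert_of_notMem (fun hc => hnO (Finset.mem_of_mem_erase hc)),
        Finset.card_erase_of_mem hxO]
      have : 0 < ((a.betaSet N).filter (fun z => z % 2 = 1)).card :=
        Finset.card_pos.mpr ⟨x, hxO⟩
      omega
    refine ⟨quot0 a N, quot1 a N, quot0 b N, quot1 b N,
      isQuotient2_iff.mpr ⟨N, hQa⟩, isQuotient2_iff.mpr ⟨N, hQb⟩, Or.inr ⟨hb0a0, ?_⟩⟩
    refine removeHook_iff.mpr ⟨oddCount a N, hQa.2.2.2.1, ?_, x / 2, ?_, by omega, ?_, ?_⟩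
    · rw [← hcOb]; exact hQb.2.2.2.1
    · rw [hQa.2.2.2.2.2]
      exact Finset.mem_image.mpr ⟨x, hxO, rfl⟩
    · rw [hQa.2.2.2.2.2]
      intro hc
      obtain ⟨z, hz, hz2⟩ := Finset.mem_image.mp hc
      have hzp := hOall z hz
      have hzE : z = x - 2 * h := by omega
      exact hnO (hzE ▸ hz)
    · have hq := hQb.2.2.2.2.2
      rw [hcOb] at hq
      rw [hq, hOb, image_half_insert_erase hOall hxO, ← hQa.2.2.2.2.2]
      have : (x - 2 * h) / 2 = x / 2 - h := by omega
      rw [this]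

theorem step_backward {a b a0 a1 b0 b1 : PartitionSeq} {h : ℕ}
    (hQA : IsQuotient2 a a0 a1) (hQB : IsQuotient2 b b0 b1) (hinv : SameInv a b)
    (hd : (RemoveHook a0 b0 h ∧ b1 = a1) ∨ (b0 = a0 ∧ RemoveHook a1 b1 h)) :
    RemoveHook a b (2 * h) := by
  obtain ⟨Na, hQa0⟩ := isQuotient2_iff.mp hQA
  obtain ⟨Nb, hQb0⟩ := isQuotient2_iff.mp hQB
  have hMe : Even (max Na Nb) := by
    rcases max_cases Na Nb with ⟨he, _⟩ | ⟨he, _⟩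
    · rw [he]; exact hQa0.1
    · rw [he]; exact hQb0.1
  rcases hd with ⟨hR, hb1a1⟩ | ⟨hb0a0, hR⟩
  · -- hook in component 0
    obtain ⟨N0, hR0⟩ := removeHook_iff.mp hR
    set N := max Na Nb + 2 * N0 with hNdef
    have hNe : Even N := by
      obtain ⟨u, hu⟩ := hMe
      exact ⟨u + N0, by omega⟩
    have hQa : QuotAt a a0 a1 N := (hQa0.mono (le_max_left _ _) hMe).add_two_mul N0
    have hQb : QuotAt b b0 b1 N := (hQb0.mono (le_max_right _ _) hMe).add_two_mul N0
    have hE : N0 ≤ evenCount a N := by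
      have h1 := evenCount_of_le (hQa0.mono (le_max_left _ _) hMe).2.1
        (show max Na Nb ≤ N by omega) (by obtain ⟨u, hu⟩ := hMe; omega)
      omega
    have hee : evenCount b N = evenCount a N := by
      have h1 := hinv N hNe hQa.2.1 hQb.2.1
      have h2 := evenCount_add_oddCount a N
      have h3 := evenCount_add_oddCount b N
      omega
    have hoo : oddCount b N = oddCount a N := hinv N hNe hQa.2.1 hQb.2.1 |>.symm
    obtain ⟨h00, h0b, y, hy, hhy, hny, hSb⟩ := hR0.mono hE
    have hpos : 0 < h := by
      by_contra hc
      have : h = 0 := by omega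
      subst this
      simp at hny
      exact hny hy
    have hba := betaSet_eq_of_quotAt hQa
    have hbb := betaSet_eq_of_quotAt hQb
    rw [hee, hoo, hb1a1, hSb] at hbb
    refine removeHook_iff.mpr ⟨N, hQa.2.1, hQb.2.1, 2 * y, ?_, by omega, ?_, ?_⟩
    · rw [hba]
      exact Finset.mem_union_left _ (Finset.mem_image.mpr ⟨y, hy, rfl⟩)
    · rw [hba]
      intro hc
      rcases Finset.mem_union.mp hc with hc | hc
      · obtain ⟨z, hz, hz2⟩ := Finset.mem_image.mp hc
        have : z = y - h := by omega
        exact hny (this ▸ hz)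
      · obtain ⟨z, hz, hz2⟩ := Finset.mem_image.mp hc
        omega
    · rw [hbb, hba]
      ext w
      simp only [Finset.mem_union, Finset.mem_image, Finset.mem_insert, Finset.mem_erase]
      constructor
      · rintro (⟨z, (rfl | ⟨hzy, hz⟩), rfl⟩ | ⟨z, hz, rfl⟩)
        · left; omega
        · right
          refine ⟨by omega, Or.inl ⟨z, hz, rfl⟩⟩
        · right
          refine ⟨by omega, Or.inr ⟨z, hz, rfl⟩⟩
      · rintro (rfl | ⟨hw, (⟨z, hz, rfl⟩ | ⟨z, hz, rfl⟩)⟩)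
        · exact Or.inl ⟨y - h, Or.inl rfl, by omega⟩
        · exact Or.inl ⟨z, Or.inr ⟨by omega, hz⟩, rfl⟩
        · exact Or.inr ⟨z, hz, rfl⟩
  · -- hook in component 1
    obtain ⟨N0, hR0⟩ := removeHook_iff.mp hR
    set N := max Na Nb + 2 * N0 with hNdef
    have hNe : Even N := by
      obtain ⟨u, hu⟩ := hMe
      exact ⟨u + N0, by omega⟩
    have hQa : QuotAt a a0 a1 N := (hQa0.mono (le_max_left _ _) hMe).add_two_mul N0
    have hQb : QuotAt b b0 b1 N := (hQb0.mono (le_max_right _ _) hMe).add_two_mul N0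
    have hO : N0 ≤ oddCount a N := by
      have h1 := oddCount_of_le (hQa0.mono (le_max_left _ _) hMe).2.1
        (show max Na Nb ≤ N by omega) (by obtain ⟨u, hu⟩ := hMe; omega)
      omega
    have hoo : oddCount b N = oddCount a N := hinv N hNe hQa.2.1 hQb.2.1 |>.symm
    have hee : evenCount b N = evenCount a N := by
      have h2 := evenCount_add_oddCount a N
      have h3 := evenCount_add_oddCount b N
      omega
    obtain ⟨h00, h0b, y, hy, hhy, hny, hSb⟩ := hR0.mono hO
    have hpos : 0 < h := by
      by_contra hc
      have : h = 0 := by omega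
      subst this
      simp at hny
      exact hny hy
    have hba := betaSet_eq_of_quotAt hQa
    have hbb := betaSet_eq_of_quotAt hQb
    rw [hee, hoo, hb0a0, hSb] at hbb
    refine removeHook_iff.mpr ⟨N, hQa.2.1, hQb.2.1, 2 * y + 1, ?_, by omega, ?_, ?_⟩
    · rw [hba]
      exact Finset.mem_union_right _ (Finset.mem_image.mpr ⟨y, hy, rfl⟩)
    · rw [hba]
      intro hc
      rcases Finset.mem_union.mp hc with hc | hc
      · obtain ⟨z, hz, hz2⟩ := Finset.mem_image.mp hc
        omega
      · obtain ⟨z, hz, hz2⟩ := Finset.mem_image.mp hc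
        have : z = y - h := by omega
        exact hny (this ▸ hz)
    · rw [hbb, hba]
      ext w
      simp only [Finset.mem_union, Finset.mem_image, Finset.mem_insert, Finset.mem_erase]
      constructor
      · rintro (⟨z, hz, rfl⟩ | ⟨z, (rfl | ⟨hzy, hz⟩), rfl⟩)
        · right
          refine ⟨by omega, Or.inl ⟨z, hz, rfl⟩⟩
        · left; omega
        · right
          refine ⟨by omega, Or.inr ⟨z, hz, rfl⟩⟩
      · rintro (rfl | ⟨hw, (⟨z, hz, rfl⟩ | ⟨z, hz, rfl⟩)⟩)
        · exact Or.inr ⟨y - h, Or.inl rfl, by omega⟩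
        · exact Or.inl ⟨z, hz, rfl⟩
        · exact Or.inr ⟨z, Or.inr ⟨by omega, hz⟩, rfl⟩

/-! ### quotient rows -/

theorem two_pow_succ (k : ℕ) : 2 ^ (k + 1) = 2 * 2 ^ k := by
  rw [pow_succ]; ring

theorem row_congr : ∀ {k : ℕ} {l : PartitionSeq} {f f' : ℕ → PartitionSeq},
    IsQuotRow k l f → (∀ i < 2 ^ k, f i = f' i) → IsQuotRow k l f' := by
  intro k
  induction k with
  | zero =>
    intro l f f' hf h
    exact (h 0 (by norm_num)).symm.trans hf
  | succ k ih =>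
    intro l f f' hf h
    obtain ⟨g, hg, hq⟩ := hf
    have hp := two_pow_succ k
    refine ⟨g, hg, fun i hi => ?_⟩
    rw [← h (2 * i) (by omega), ← h (2 * i + 1) (by omega)]
    exact hq i hi

noncomputable def q0 (p : PartitionSeq) : PartitionSeq := (quot_exists p).choose

noncomputable def q1 (p : PartitionSeq) : PartitionSeq :=
  (quot_exists p).choose_spec.choose

theorem quot_spec (p : PartitionSeq) : IsQuotient2 p (q0 p) (q1 p) :=
  (quot_exists p).choose_spec.choose_spec

theorem row_exists : ∀ (k : ℕ) (l : PartitionSeq), ∃ f, IsQuotRow k l f := by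
  intro k
  induction k with
  | zero => intro l; exact ⟨fun _ => l, rfl⟩
  | succ k ih =>
    intro l
    obtain ⟨g, hg⟩ := ih l
    refine ⟨fun j => if j % 2 = 0 then q0 (g (j / 2)) else q1 (g (j / 2)), g, hg,
      fun i hi => ?_⟩
    have e1 : (fun j => if j % 2 = 0 then q0 (g (j / 2)) else q1 (g (j / 2))) (2 * i)
        = q0 (g i) := by
      dsimp only
      rw [if_pos (by omega)]
      congr 2
      omega
    have e2 : (fun j => if j % 2 = 0 then q0 (g (j / 2)) else q1 (g (j / 2))) (2 * i + 1)
        = q1 (g i) := by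
      dsimp only
      rw [if_neg (by omega)]
      congr 2
      omega
    rw [e1, e2]
    exact quot_spec (g i)

theorem row_unique : ∀ {k : ℕ} {l : PartitionSeq} {f f' : ℕ → PartitionSeq},
    IsQuotRow k l f → IsQuotRow k l f' → ∀ i < 2 ^ k, f i = f' i := by
  intro k
  induction k with
  | zero =>
    intro l f f' hf hf' i hi
    have : i = 0 := by
      have : (2:ℕ) ^ 0 = 1 := by norm_num
      omega
    subst this
    exact hf.trans hf'.symm
  | succ k ih =>
    intro l f f' hf hf' j hj
    obtain ⟨g, hg, hq⟩ := hf
    obtain ⟨g', hg', hq'⟩ := hf'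
    have hp := two_pow_succ k
    have hi : j / 2 < 2 ^ k := by omega
    have hgg : g (j / 2) = g' (j / 2) := ih hg hg' (j / 2) hi
    have hq2 := hq' (j / 2) hi
    rw [← hgg] at hq2
    have huv := quot_unique (hq (j / 2) hi) hq2
    have : j = 2 * (j / 2) ∨ j = 2 * (j / 2) + 1 := by omega
    rcases this with he | he
    · rw [he]; exact huv.1
    · rw [he]; exact huv.2

theorem row_concat : ∀ {k : ℕ} {a a0 a1 : PartitionSeq} {f0 f1 : ℕ → PartitionSeq},
    IsQuotient2 a a0 a1 → IsQuotRow k a0 f0 → IsQuotRow k a1 f1 →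
    IsQuotRow (k + 1) a (fun j => if j < 2 ^ k then f0 j else f1 (j - 2 ^ k)) := by
  intro k
  induction k with
  | zero =>
    intro a a0 a1 f0 f1 hQ hf0 hf1
    refine ⟨fun _ => a, rfl, fun i hi => ?_⟩
    rw [pow_zero] at hi
    have : i = 0 := by omega
    subst this
    have e1 : (fun j => if j < 2 ^ 0 then f0 j else f1 (j - 2 ^ 0)) (2 * 0) = a0 := by
      dsimp only
      rw [if_pos (by norm_num)]
      exact hf0
    have e2 : (fun j => if j < 2 ^ 0 then f0 j else f1 (j - 2 ^ 0)) (2 * 0 + 1) = a1 := by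
      dsimp only
      rw [if_neg (by norm_num)]
      have : 2 * 0 + 1 - 2 ^ 0 = 0 := by norm_num
      rw [this]
      exact hf1
    rw [e1, e2]
    exact hQ
  | succ k ih =>
    intro a a0 a1 f0 f1 hQ hf0 hf1
    obtain ⟨g0, hg0, hq0⟩ := hf0
    obtain ⟨g1, hg1, hq1⟩ := hf1
    have hp := two_pow_succ k
    have hp2 := two_pow_succ (k + 1)
    refine ⟨fun j => if j < 2 ^ k then g0 j else g1 (j - 2 ^ k), ih hQ hg0 hg1,
      fun i hi => ?_⟩
    by_cases hik : i < 2 ^ k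
    · have e0 : (fun j => if j < 2 ^ k then g0 j else g1 (j - 2 ^ k)) i = g0 i := by
        dsimp only; rw [if_pos hik]
      have e1 : (fun j => if j < 2 ^ (k + 1) then f0 j else f1 (j - 2 ^ (k + 1))) (2 * i)
          = f0 (2 * i) := by
        dsimp only; rw [if_pos (by omega)]
      have e2 : (fun j => if j < 2 ^ (k + 1) then f0 j else f1 (j - 2 ^ (k + 1))) (2 * i + 1)
          = f0 (2 * i + 1) := by
        dsimp only; rw [if_pos (by omega)]
      rw [e0, e1, e2]
      exact hq0 i hik
    · have e0 : (fun j => if j < 2 ^ k then g0 j else g1 (j - 2 ^ k)) i = g1 (i - 2 ^ k) := by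
        dsimp only; rw [if_neg hik]
      have e1 : (fun j => if j < 2 ^ (k + 1) then f0 j else f1 (j - 2 ^ (k + 1))) (2 * i)
          = f1 (2 * (i - 2 ^ k)) := by
        dsimp only
        rw [if_neg (by omega)]
        congr 1
        omega
      have e2 : (fun j => if j < 2 ^ (k + 1) then f0 j else f1 (j - 2 ^ (k + 1))) (2 * i + 1)
          = f1 (2 * (i - 2 ^ k) + 1) := by
        dsimp only
        rw [if_neg (by omega)]
        congr 1
        omega
      rw [e0, e1, e2]
      exact hq1 (i - 2 ^ k) (by omega)

theorem row_split : ∀ {k : ℕ} {a : PartitionSeq} {f : ℕ → PartitionSeq},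
    IsQuotRow (k + 1) a f → ∃ a0 a1, IsQuotient2 a a0 a1 ∧ IsQuotRow k a0 f ∧
      IsQuotRow k a1 (fun j => f (j + 2 ^ k)) := by
  intro k
  induction k with
  | zero =>
    intro a f hf
    obtain ⟨g, hg0, hq⟩ := hf
    have h1 := hq 0 (by norm_num)
    rw [hg0] at h1
    refine ⟨f 0, f 1, ?_, rfl, rfl⟩
    have e1 : (2 : ℕ) * 0 = 0 := by norm_num
    have e2 : (2 : ℕ) * 0 + 1 = 1 := by norm_num
    rw [e1, e2] at h1
    exact h1
  | succ k ih =>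
    intro a f hf
    obtain ⟨g, hgrow, hq⟩ := hf
    obtain ⟨a0, a1, hQ, hg0, hg1⟩ := ih hgrow
    have hp := two_pow_succ k
    have hp2 := two_pow_succ (k + 1)
    refine ⟨a0, a1, hQ, ⟨g, hg0, fun i hi => hq i (by omega)⟩,
      ⟨fun j => g (j + 2 ^ k), hg1, fun i hi => ?_⟩⟩
    have h1 := hq (i + 2 ^ k) (by omega)
    have e0 : (fun j => g (j + 2 ^ k)) i = g (i + 2 ^ k) := rfl
    have e1 : (fun j => f (j + 2 ^ (k + 1))) (2 * i) = f (2 * (i + 2 ^ k)) := by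
      dsimp only; congr 1; omega
    have e2 : (fun j => f (j + 2 ^ (k + 1))) (2 * i + 1) = f (2 * (i + 2 ^ k) + 1) := by
      dsimp only; congr 1; omega
    rw [e0, e1, e2]
    exact h1

/-! ### forward direction skeleton -/

theorem rows_rel : ∀ (k : ℕ) {m l : PartitionSeq} {h : ℕ}, RemoveHook m l (2 ^ k * h) →
    ∃ g f, IsQuotRow k m g ∧ IsQuotRow k l f ∧
      ∃ i < 2 ^ k, RemoveHook (g i) (f i) h ∧ ∀ j < 2 ^ k, j ≠ i → f j = g j := by
  intro k
  induction k with
  | zero =>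
    intro m l h H
    rw [pow_zero, one_mul] at H
    refine ⟨fun _ => m, fun _ => l, rfl, rfl, 0, by norm_num, H, fun j hj hne => ?_⟩
    rw [pow_zero] at hj
    exact absurd (by omega : j = 0) hne
  | succ k ih =>
    intro m l h H
    have hp := two_pow_succ k
    rw [show 2 ^ (k + 1) * h = 2 * (2 ^ k * h) by rw [two_pow_succ]; ring] at H
    obtain ⟨m0, m1, l0, l1, hQm, hQl, hcase⟩ := step_forward H
    rcases hcase with ⟨hR, hl1⟩ | ⟨hl0, hR⟩
    · obtain ⟨g0, f0, hg0, hf0, i0, hi0, hRi, heq⟩ := ih hR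
      subst hl1
      obtain ⟨r, hr⟩ := row_exists k l1
      refine ⟨fun j => if j < 2 ^ k then g0 j else r (j - 2 ^ k),
        fun j => if j < 2 ^ k then f0 j else r (j - 2 ^ k),
        row_concat hQm hg0 hr, row_concat hQl hf0 hr, i0, by omega, ?_, ?_⟩
      · dsimp only
        rw [if_pos hi0, if_pos hi0]
        exact hRi
      · intro j hj hne
        dsimp only
        by_cases hjk : j < 2 ^ k
        · rw [if_pos hjk, if_pos hjk]
          exact heq j hjk hne
        · rw [if_neg hjk, if_neg hjk]
    · obtain ⟨g1, f1, hg1, hf1, i1, hi1, hRi, heq⟩ := ih hR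
      subst hl0
      obtain ⟨r, hr⟩ := row_exists k l0
      refine ⟨fun j => if j < 2 ^ k then r j else g1 (j - 2 ^ k),
        fun j => if j < 2 ^ k then r j else f1 (j - 2 ^ k),
        row_concat hQm hr hg1, row_concat hQl hr hf1, 2 ^ k + i1, by omega, ?_, ?_⟩
      · dsimp only
        rw [if_neg (by omega), if_neg (by omega)]
        rw [show 2 ^ k + i1 - 2 ^ k = i1 by omega]
        exact hRi
      · intro j hj hne
        dsimp only
        by_cases hjk : j < 2 ^ k
        · rw [if_pos hjk, if_pos hjk]
        · rw [if_neg hjk, if_neg hjk]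
          exact heq (j - 2 ^ k) (by omega) (by omega)

theorem clause_of_removeHook {k : ℕ} {m l : PartitionSeq} (H : RemoveHook m l (2 ^ k)) :
    ∀ j, j < k → ∀ gj fj, IsQuotRow j m gj → IsQuotRow j l fj →
      ∀ i < 2 ^ j, SameInv (gj i) (fj i) := by
  intro j hj gj fj hgj hfj i hi
  have hdec : 2 ^ k = 2 ^ j * 2 ^ (k - j) := by
    rw [← pow_add]
    congr 1
    omega
  rw [hdec] at H
  obtain ⟨g, f, hg, hf, i0, hi0, hR, heq⟩ := rows_rel j H
  have hgg := row_unique hgj hg i hi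
  have hff := row_unique hfj hf i hi
  rw [hgg, hff]
  by_cases hii : i = i0
  · subst hii
    apply sameInv_of_removeHook ?_ hR
    have hkj : k - j = (k - j - 1) + 1 := by omega
    rw [hkj, pow_succ]
    omega
  · rw [heq i hi hii]
    exact sameInv_refl _

/-! ### backward direction -/

theorem rows_eq : ∀ (k : ℕ) {a b : PartitionSeq} {f f' : ℕ → PartitionSeq},
    IsQuotRow k a f → IsQuotRow k b f' → (∀ i < 2 ^ k, f i = f' i) →
    (∀ j, j < k → ∀ gj fj, IsQuotRow j a gj → IsQuotRow j b fj →
      ∀ i < 2 ^ j, SameInv (gj i) (fj i)) →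
    SameInv a b → a = b := by
  intro k
  induction k with
  | zero =>
    intro a b f f' hf hf' heq _ _
    have h1 : f 0 = a := hf
    have h2 : f' 0 = b := hf'
    rw [← h1, ← h2, heq 0 (by norm_num)]
  | succ k ih =>
    intro a b f f' hf hf' heq hclause hinv
    obtain ⟨a0, a1, hQa, hfa0, hfa1⟩ := row_split hf
    obtain ⟨b0, b1, hQb, hfb0, hfb1⟩ := row_split hf'
    have hp := two_pow_succ k
    have ha0b0 : a0 = b0 := by
      refine ih hfa0 hfb0 (fun i hi => heq i (by omega)) ?_ ?_
      · intro j hj gj fj hgj hfj i hi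
        obtain ⟨r1, hr1⟩ := row_exists j a1
        obtain ⟨r1', hr1'⟩ := row_exists j b1
        have hrow_a := row_concat hQa hgj hr1
        have hrow_b := row_concat hQb hfj hr1'
        have hc := hclause (j + 1) (by omega) _ _ hrow_a hrow_b i
          (by have := two_pow_succ j; omega)
        rw [if_pos hi, if_pos hi] at hc
        exact hc
      · rcases Nat.eq_zero_or_pos k with rfl | hk
        · have h1 : f 0 = a0 := hfa0
          have h2 : f' 0 = b0 := hfb0
          rw [← h1, ← h2, heq 0 (by norm_num)]
          exact sameInv_refl _
        · have hrow_a := row_concat (k := 0) hQa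
            (show IsQuotRow 0 a0 (fun _ => a0) from rfl)
            (show IsQuotRow 0 a1 (fun _ => a1) from rfl)
          have hrow_b := row_concat (k := 0) hQb
            (show IsQuotRow 0 b0 (fun _ => b0) from rfl)
            (show IsQuotRow 0 b1 (fun _ => b1) from rfl)
          have hc := hclause 1 (by omega) _ _ hrow_a hrow_b 0 (by norm_num)
          rw [if_pos (by norm_num : (0:ℕ) < 2 ^ 0), if_pos (by norm_num : (0:ℕ) < 2 ^ 0)] at hc
          exact hc
    have ha1b1 : a1 = b1 := by
      refine ih hfa1 hfb1 (fun i hi => ?_) ?_ ?_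
      · show f (i + 2 ^ k) = f' (i + 2 ^ k)
        exact heq (i + 2 ^ k) (by omega)
      · intro j hj gj fj hgj hfj i hi
        obtain ⟨r0, hr0⟩ := row_exists j a0
        obtain ⟨r0', hr0'⟩ := row_exists j b0
        have hrow_a := row_concat hQa hr0 hgj
        have hrow_b := row_concat hQb hr0' hfj
        have hpj := two_pow_succ j
        have hc := hclause (j + 1) (by omega) _ _ hrow_a hrow_b (i + 2 ^ j) (by omega)
        rw [if_neg (by omega : ¬ i + 2 ^ j < 2 ^ j), if_neg (by omega : ¬ i + 2 ^ j < 2 ^ j),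
          show i + 2 ^ j - 2 ^ j = i from by omega] at hc
        exact hc
      · rcases Nat.eq_zero_or_pos k with rfl | hk
        · have h1 : f (0 + 2 ^ 0) = a1 := hfa1
          have h2 : f' (0 + 2 ^ 0) = b1 := hfb1
          rw [← h1, ← h2, heq (0 + 2 ^ 0) (by norm_num)]
          exact sameInv_refl _
        · have hrow_a := row_concat (k := 0) hQa
            (show IsQuotRow 0 a0 (fun _ => a0) from rfl)
            (show IsQuotRow 0 a1 (fun _ => a1) from rfl)
          have hrow_b := row_concat (k := 0) hQb
            (show IsQuotRow 0 b0 (fun _ => b0) from rfl)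
            (show IsQuotRow 0 b1 (fun _ => b1) from rfl)
          have hc := hclause 1 (by omega) _ _ hrow_a hrow_b 1 (by norm_num)
          rw [if_neg (by norm_num : ¬ (1:ℕ) < 2 ^ 0), if_neg (by norm_num : ¬ (1:ℕ) < 2 ^ 0)] at hc
          exact hc
    subst ha0b0
    subst ha1b1
    exact quot_inj hQa hQb hinv

theorem main_backward : ∀ (k : ℕ) {m l : PartitionSeq} {h : ℕ} {g f : ℕ → PartitionSeq},
    IsQuotRow k m g → IsQuotRow k l f →
    (∀ j, j < k → ∀ gj fj, IsQuotRow j m gj → IsQuotRow j l fj →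
      ∀ i < 2 ^ j, SameInv (gj i) (fj i)) →
    (∃ i < 2 ^ k, RemoveHook (g i) (f i) h ∧ ∀ j < 2 ^ k, j ≠ i → f j = g j) →
    RemoveHook m l (2 ^ k * h) := by
  intro k
  induction k with
  | zero =>
    intro m l h g f hg hf _ hex
    obtain ⟨i, hi, hR, _⟩ := hex
    rw [pow_zero] at hi
    have : i = 0 := by omega
    subst this
    have h1 : g 0 = m := hg
    have h2 : f 0 = l := hf
    rw [pow_zero, one_mul, ← h1, ← h2]
    exact hR
  | succ k ih =>
    intro m l h g f hg hf hclause hex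
    obtain ⟨i, hi, hR, heq⟩ := hex
    have hp := two_pow_succ k
    obtain ⟨m0, m1, hQm, hgm0, hgm1⟩ := row_split hg
    obtain ⟨l0, l1, hQl, hfl0, hfl1⟩ := row_split hf
    have hinv_ml : SameInv m l := by
      have hc := hclause 0 (by omega) (fun _ => m) (fun _ => l) rfl rfl 0 (by norm_num)
      exact hc
    have hclause_left : ∀ j, j < k → ∀ gj fj, IsQuotRow j m0 gj → IsQuotRow j l0 fj →
        ∀ i' < 2 ^ j, SameInv (gj i') (fj i') := by
      intro j hj gj fj hgj hfj i' hi'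
      obtain ⟨r1, hr1⟩ := row_exists j m1
      obtain ⟨r1', hr1'⟩ := row_exists j l1
      have hrow_m := row_concat hQm hgj hr1
      have hrow_l := row_concat hQl hfj hr1'
      have hc := hclause (j + 1) (by omega) _ _ hrow_m hrow_l i'
        (by have := two_pow_succ j; omega)
      rw [if_pos hi', if_pos hi'] at hc
      exact hc
    have hclause_right : ∀ j, j < k → ∀ gj fj, IsQuotRow j m1 gj → IsQuotRow j l1 fj →
        ∀ i' < 2 ^ j, SameInv (gj i') (fj i') := by
      intro j hj gj fj hgj hfj i' hi'
      obtain ⟨r0, hr0⟩ := row_exists j m0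
      obtain ⟨r0', hr0'⟩ := row_exists j l0
      have hrow_m := row_concat hQm hr0 hgj
      have hrow_l := row_concat hQl hr0' hfj
      have hpj := two_pow_succ j
      have hc := hclause (j + 1) (by omega) _ _ hrow_m hrow_l (i' + 2 ^ j) (by omega)
      rw [if_neg (by omega : ¬ i' + 2 ^ j < 2 ^ j), if_neg (by omega : ¬ i' + 2 ^ j < 2 ^ j),
        show i' + 2 ^ j - 2 ^ j = i' from by omega] at hc
      exact hc
    rw [show 2 ^ (k + 1) * h = 2 * (2 ^ k * h) by rw [two_pow_succ]; ring]
    by_cases hik : i < 2 ^ k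
    · -- hook in left half
      have hinv1 : SameInv m1 l1 := by
        rcases Nat.eq_zero_or_pos k with rfl | hk
        · have h1 : g (0 + 2 ^ 0) = m1 := hgm1
          have h2 : f (0 + 2 ^ 0) = l1 := hfl1
          have hi0 : i = 0 := by rw [pow_zero] at hik; omega
          rw [← h1, ← h2, heq (0 + 2 ^ 0) (by norm_num) (by omega)]
          exact sameInv_refl _
        · have hrow_m := row_concat (k := 0) hQm
            (show IsQuotRow 0 m0 (fun _ => m0) from rfl)
            (show IsQuotRow 0 m1 (fun _ => m1) from rfl)
          have hrow_l := row_concat (k := 0) hQl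
            (show IsQuotRow 0 l0 (fun _ => l0) from rfl)
            (show IsQuotRow 0 l1 (fun _ => l1) from rfl)
          have hc := hclause 1 (by omega) _ _ hrow_m hrow_l 1 (by norm_num)
          rw [if_neg (by norm_num : ¬ (1:ℕ) < 2 ^ 0), if_neg (by norm_num : ¬ (1:ℕ) < 2 ^ 0)] at hc
          exact hc
      have hml1 : m1 = l1 := by
        refine rows_eq k hgm1 hfl1 (fun i' hi' => ?_) hclause_right hinv1
        show g (i' + 2 ^ k) = f (i' + 2 ^ k)
        exact (heq (i' + 2 ^ k) (by omega) (by omega)).symm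
      have hR0 : RemoveHook m0 l0 (2 ^ k * h) :=
        ih hgm0 hfl0 hclause_left ⟨i, hik, hR, fun j hj hne => heq j (by omega) hne⟩
      exact step_backward hQm hQl hinv_ml (Or.inl ⟨hR0, hml1.symm⟩)
    · -- hook in right half
      have hinv0 : SameInv m0 l0 := by
        rcases Nat.eq_zero_or_pos k with rfl | hk
        · have h1 : g 0 = m0 := hgm0
          have h2 : f 0 = l0 := hfl0
          have hi1 : i ≠ 0 := by rw [pow_zero] at hik; omega
          rw [← h1, ← h2, heq 0 (by norm_num) (by omega)]
          exact sameInv_refl _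
        · have hrow_m := row_concat (k := 0) hQm
            (show IsQuotRow 0 m0 (fun _ => m0) from rfl)
            (show IsQuotRow 0 m1 (fun _ => m1) from rfl)
          have hrow_l := row_concat (k := 0) hQl
            (show IsQuotRow 0 l0 (fun _ => l0) from rfl)
            (show IsQuotRow 0 l1 (fun _ => l1) from rfl)
          have hc := hclause 1 (by omega) _ _ hrow_m hrow_l 0 (by norm_num)
          rw [if_pos (by norm_num : (0:ℕ) < 2 ^ 0), if_pos (by norm_num : (0:ℕ) < 2 ^ 0)] at hc
          exact hc
      have hml0 : m0 = l0 := by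
        refine rows_eq k hgm0 hfl0 (fun i' hi' => ?_) hclause_left hinv0
        exact (heq i' (by omega) (by omega)).symm
      have hR1 : RemoveHook m1 l1 (2 ^ k * h) := by
        refine ih hgm1 hfl1 hclause_right ⟨i - 2 ^ k, by omega, ?_, ?_⟩
        · show (g (i - 2 ^ k + 2 ^ k)).RemoveHook (f (i - 2 ^ k + 2 ^ k)) h
          rw [show i - 2 ^ k + 2 ^ k = i from by omega]
          exact hR
        · intro j hj hne
          show f (j + 2 ^ k) = g (j + 2 ^ k)
          exact heq (j + 2 ^ k) (by omega) (by omega)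
      exact step_backward hQm hQl hinv_ml (Or.inr ⟨hml0.symm, hR1⟩)

theorem main_iff (k : ℕ) (m l : PartitionSeq) :
    RemoveHook m l (2 ^ k) ↔
      ∃ g f : ℕ → PartitionSeq, IsQuotRow k m g ∧ IsQuotRow k l f ∧
        (∀ j, j < k → ∀ gj fj, IsQuotRow j m gj → IsQuotRow j l fj →
          ∀ i < 2 ^ j, SameInv (gj i) (fj i)) ∧
        ∃ i < 2 ^ k, RemoveHook (g i) (f i) 1 ∧ ∀ j < 2 ^ k, j ≠ i → f j = g j := by
  constructor
  · intro H
    have H1 : RemoveHook m l (2 ^ k * 1) := by rw [mul_one]; exact H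
    obtain ⟨g, f, hg, hf, i, hi, hR, heq⟩ := rows_rel k H1
    exact ⟨g, f, hg, hf, clause_of_removeHook H, i, hi, hR, heq⟩
  · rintro ⟨g, f, hg, hf, hclause, i, hi, hR, heq⟩
    have := main_backward k hg hf hclause ⟨i, hi, hR, heq⟩
    rw [mul_one] at this
    exact this


end PartitionSeq

open PartitionSeq

theorem stmt_8 (n k : ℕ) (hk : 2 ^ k ≤ n) (l m : PartitionSeq)
    (hm : m.size = n) (hl : l.size = n - 2 ^ k) :
    RemoveHook m l (2 ^ k) ↔
      ∃ g f : ℕ → PartitionSeq, IsQuotRow k m g ∧ IsQuotRow k l f ∧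
        (∀ j < k, ∀ gj fj : ℕ → PartitionSeq, IsQuotRow j m gj → IsQuotRow j l fj →
          ∀ i < 2 ^ j, ∀ c : PartitionSeq, IsECore 2 (gj i) c → IsECore 2 (fj i) c) ∧
        ∃ i < 2 ^ k, RemoveHook (g i) (f i) 1 ∧
          ∀ j < 2 ^ k, j ≠ i → f j = g j := by
  rw [main_iff]
  constructor
  · rintro ⟨g, f, hg, hf, hclause, hex⟩
    refine ⟨g, f, hg, hf, ?_, hex⟩
    intro j hj gj fj hgj hfj i hi c hc
    exact isECore2_congr (hclause j hj gj fj hgj hfj i hi) hc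
  · rintro ⟨g, f, hg, hf, hclause, hex⟩
    refine ⟨g, f, hg, hf, ?_, hex⟩
    intro j hj gj fj hgj hfj i hi
    exact (sameInv_iff_core_imp _ _).mpr
      (fun c hc => hclause j hj gj fj hgj hfj i hi c hc)
end
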